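/- arXiv:1601.04254 — 2 statements merged into one kernel-verified Lean document; each statement's English description precedes it below -/
import Mathlib

section
/- Let Z be a set, ≤ a linear order on M(Z), S ⊆ kM(Z) monicized with respect to ≤, and Π_S the term-rewriting system from ≤. If Π_S is terminating and Id(S) ∩ k·Irr(S) = 0, then Π_S is confluent, where Irr(S) = M(Z) ∖ { q|_{lm(s)} : q ∈ M^⋆(Z), s ∈ S }. -/
namespace RotaGS

/-- Bracketed words on `Z`: elements of the free operated monoid `M(Z)`.
A bracketed word is a (possibly empty) list of letters, each letter being either a
variable from `Z` or a bracketed word `⌊u⌋`. -/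
inductive OpWord (Z : Type) : Type
  | one : OpWord Z
  | var : Z → OpWord Z → OpWord Z
  | brkCons : OpWord Z → OpWord Z → OpWord Z

namespace OpWord

variable {Z : Type}

/-- Concatenation (product) of bracketed words. -/
def mul : OpWord Z → OpWord Z → OpWord Z
  | one, w => w
  | var z u, w => var z (mul u w)
  | brkCons b u, w => brkCons b (mul u w)

instance : Mul (OpWord Z) := ⟨mul⟩
instance : One (OpWord Z) := ⟨one⟩

/-- The operator `u ↦ ⌊u⌋`. -/
def brk (u : OpWord Z) : OpWord Z := brkCons u one

/-- Substitution of bracketed words for variables. -/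
def substVar {Y : Type} (σ : Z → OpWord Y) : OpWord Z → OpWord Y
  | one => one
  | var z w => (σ z).mul (substVar σ w)
  | brkCons u w => brkCons (substVar σ u) (substVar σ w)

/-- The breadth `|f|` of a bracketed word. -/
def breadth : OpWord Z → ℕ
  | one => 0
  | var _ w => 1 + breadth w
  | brkCons _ w => 1 + breadth w

/-- Number of occurrences of the variable `x` in a bracketed word. -/
def varCount [DecidableEq Z] (x : Z) : OpWord Z → ℕ
  | one => 0
  | var z w => (if z = x then 1 else 0) + varCount x w
  | brkCons u w => varCount x u + varCount x w

end OpWord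

/-- `⋆`-bracketed words on `Z`: bracketed words on `Z ∪ {⋆}` with exactly one
occurrence of `⋆`. -/
inductive StarWord (Z : Type) : Type
  | star : StarWord Z
  | brk : StarWord Z → StarWord Z
  | mul : OpWord Z → StarWord Z → OpWord Z → StarWord Z

/-- `q|_u` : replace `⋆` in `q` by the bracketed word `u`. -/
def StarWord.subst {Z : Type} : StarWord Z → OpWord Z → OpWord Z
  | .star, u => u
  | .brk q, u => OpWord.brk (q.subst u)
  | .mul a q b, u => a.mul ((q.subst u).mul b)

/-- The free `k`-module `kM(Z)` with basis the bracketed words `M(Z)`. -/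
abbrev kM (k Z : Type) [Field k] : Type := OpWord Z →₀ k

/-- The linear extension `q|_s` of `u ↦ q|_u`. -/
noncomputable def StarWord.substF {k Z : Type} [Field k] (q : StarWord Z) (s : kM k Z) : kM k Z :=
  Finsupp.mapDomain q.subst s

/-- Substitution (evaluation) of an operated polynomial `φ ∈ kM(X)` along an
assignment `σ` of bracketed words to the variables. -/
noncomputable def substOPI {k X Z : Type} [Field k] (σ : X → OpWord Z) (φ : kM k X) : kM k Z :=
  Finsupp.mapDomain (OpWord.substVar σ) φ

/-- Right multiplication `f · u` of `f ∈ kM(Z)` by a word `u`. -/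
noncomputable def mulWordRight {k Z : Type} [Field k] (f : kM k Z) (u : OpWord Z) : kM k Z :=
  Finsupp.mapDomain (fun m => m.mul u) f

/-- Left multiplication `v · g` of `g ∈ kM(Z)` by a word `v`. -/
noncomputable def mulWordLeft {k Z : Type} [Field k] (v : OpWord Z) (g : kM k Z) : kM k Z :=
  Finsupp.mapDomain (fun m => v.mul m) g

/-- `lt` is a monomial order on `M(Z)`: a well-order such that `u < v` implies
`q|_u < q|_v` for every `⋆`-bracketed word `q`. -/
structure IsMonomialOrder {Z : Type} (lt : OpWord Z → OpWord Z → Prop) : Prop where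
  wellOrder : IsWellOrder (OpWord Z) lt
  compat : ∀ (q : StarWord Z) (u v : OpWord Z), lt u v → lt (q.subst u) (q.subst v)

/-- `w` is the leading monomial of `f` with respect to the strict order `lt`. -/
def IsLeadingMonomial {k Z : Type} [Field k] (lt : OpWord Z → OpWord Z → Prop)
    (f : kM k Z) (w : OpWord Z) : Prop :=
  w ∈ f.support ∧ ∀ w' ∈ f.support, w' ≠ w → lt w' w

/-- `S` is monicized with respect to `lt`: every `s ∈ S` has leading coefficient `1`. -/
def Monicized {k Z : Type} [Field k] (lt : OpWord Z → OpWord Z → Prop)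
    (S : Set (kM k Z)) : Prop :=
  ∀ s ∈ S, ∃ w, IsLeadingMonomial lt s w ∧ s w = 1

/-- `R(s)` for `s` oriented at the monomial `w`, after monicization:
`R(s) = w − (coefficient of w in s)⁻¹ • s`. -/
noncomputable def Rrem {k Z : Type} [Field k] (s : kM k Z) (w : OpWord Z) : kM k Z :=
  Finsupp.single w 1 - (s w)⁻¹ • s

section TRS

variable {k W : Type} [Field k]

/-- One-step rewriting for a term-rewriting system `R ⊆ W × kW` on the free module
with basis `W`: if `f = c·t + f'` with `c ≠ 0`, `t ∉ Supp f'` and `(t,v) ∈ R`,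
then `f` rewrites to `c·v + f'`. -/
def OneStep (R : Set (W × (W →₀ k))) (f g : W →₀ k) : Prop :=
  ∃ (c : k) (t : W) (v f' : W →₀ k),
    c ≠ 0 ∧ (t, v) ∈ R ∧ t ∉ f'.support ∧
    f = Finsupp.single t c + f' ∧ g = c • v + f'

/-- `f →* g`: reflexive-transitive closure of one-step rewriting. -/
def Rewrites (R : Set (W × (W →₀ k))) : (W →₀ k) → (W →₀ k) → Prop :=
  Relation.ReflTransGen (OneStep R)

/-- `f ↓ g`: joinability. -/
def Joinable (R : Set (W × (W →₀ k))) (f g : W →₀ k) : Prop :=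
  ∃ h, Rewrites R f h ∧ Rewrites R g h

/-- A term-rewriting system is simple if `t ∉ Supp v` for every rule `t → v`. -/
def SimpleTRS (R : Set (W × (W →₀ k))) : Prop := ∀ p ∈ R, p.1 ∉ p.2.support

/-- Terminating: no infinite chain of one-step rewritings. -/
def Terminating (R : Set (W × (W →₀ k))) : Prop :=
  ¬ ∃ seq : ℕ → (W →₀ k), ∀ n, OneStep R (seq n) (seq (n + 1))

/-- Confluent: every fork is joinable. -/
def Confluent (R : Set (W × (W →₀ k))) : Prop :=
  ∀ ⦃f g₁ g₂ : W →₀ k⦄, Rewrites R f g₁ → Rewrites R f g₂ → Joinable R g₁ g₂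

/-- Locally confluent: every local fork is joinable. -/
def LocallyConfluent (R : Set (W × (W →₀ k))) : Prop :=
  ∀ ⦃f g₁ g₂ : W →₀ k⦄, OneStep R f g₁ → OneStep R f g₂ → Joinable R g₁ g₂

/-- Convergent: terminating and confluent. -/
def ConvergentTRS (R : Set (W × (W →₀ k))) : Prop := Terminating R ∧ Confluent R

end TRS

/-- The term-rewriting system `Π_S` from the order `lt`:
rules `q|_{lm(s)} → q|_{R(s)}` for `s ∈ S`, `q ∈ M^⋆(Z)`. -/
def PiS {k Z : Type} [Field k] (lt : OpWord Z → OpWord Z → Prop) (S : Set (kM k Z)) :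
    Set (OpWord Z × kM k Z) :=
  { p | ∃ s ∈ S, ∃ w, IsLeadingMonomial lt s w ∧
        ∃ q : StarWord Z, p = (q.subst w, q.substF (Rrem s w)) }

/-- The term-rewriting system associated to `S` with respect to an
orientation `or` (a choice of a monomial `or s` for each `s ∈ S`). -/
def assocTRS {k Z : Type} [Field k] (S : Set (kM k Z)) (or : kM k Z → OpWord Z) :
    Set (OpWord Z × kM k Z) :=
  { p | ∃ s ∈ S, ∃ q : StarWord Z, p = (q.subst (or s), q.substF (Rrem s (or s))) }

/-- `or` is an orientation of `S`: it picks a monomial of each `s ∈ S`. -/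
def IsOrientation {k Z : Type} [Field k] (S : Set (kM k Z)) (or : kM k Z → OpWord Z) : Prop :=
  ∀ s ∈ S, or s ∈ s.support

/-- The operated ideal `Id(S)` generated by `S`:
`Id(S) = { Σᵢ cᵢ qᵢ|_{sᵢ} : cᵢ ∈ k, qᵢ ∈ M^⋆(Z), sᵢ ∈ S }`. -/
noncomputable def OpIdeal {k Z : Type} [Field k] (S : Set (kM k Z)) : Submodule k (kM k Z) :=
  Submodule.span k { x | ∃ s ∈ S, ∃ q : StarWord Z, x = q.substF s }

/-- `Irr(S) = M(Z) ∖ { q|_{lm(s)} : q ∈ M^⋆(Z), s ∈ S }`. -/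
def IrrSet {k Z : Type} [Field k] (lt : OpWord Z → OpWord Z → Prop) (S : Set (kM k Z)) :
    Set (OpWord Z) :=
  { w | ¬ ∃ s ∈ S, ∃ ws, IsLeadingMonomial lt s ws ∧ ∃ q : StarWord Z, w = q.subst ws }

/-- The `k`-linear span of a set of bracketed words inside `kM(Z)`. -/
noncomputable def spanSet (k : Type) [Field k] {Z : Type} (T : Set (OpWord Z)) : Submodule k (kM k Z) :=
  Submodule.span k ((fun w => Finsupp.single w (1 : k)) '' T)

/-- `h` is trivial modulo `(S, w)`: `h = Σᵢ cᵢ qᵢ|_{sᵢ}` with `qᵢ|_{lm(sᵢ)} < w`. -/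
def TrivialMod {k Z : Type} [Field k] (lt : OpWord Z → OpWord Z → Prop)
    (S : Set (kM k Z)) (w : OpWord Z) (h : kM k Z) : Prop :=
  ∃ (n : ℕ) (c : Fin n → k) (q : Fin n → StarWord Z) (s : Fin n → kM k Z),
    (∀ i, s i ∈ S) ∧
    (∀ i, ∃ wi, IsLeadingMonomial lt (s i) wi ∧ lt ((q i).subst wi) w) ∧
    h = ∑ i, c i • (q i).substF (s i)

/-- The monicization of `S` with respect to `lt`. -/
def MonicVersion {k Z : Type} [Field k] (lt : OpWord Z → OpWord Z → Prop)
    (S : Set (kM k Z)) : Set (kM k Z) :=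
  { f | ∃ s ∈ S, ∃ w, IsLeadingMonomial lt s w ∧ f = (s w)⁻¹ • s }

/-- `S` is a Gröbner–Shirshov basis in `kM(Z)` with respect to `lt`: after
monicization, every intersection composition and every including composition of
pairs of elements of `S` is trivial modulo `(S, w)`. -/
def IsGSBasis {k Z : Type} [Field k] (lt : OpWord Z → OpWord Z → Prop)
    (S : Set (kM k Z)) : Prop :=
  (∀ f ∈ MonicVersion lt S, ∀ g ∈ MonicVersion lt S,
    ∀ (wf wg u v w : OpWord Z),
      IsLeadingMonomial lt f wf → IsLeadingMonomial lt g wg →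
      w = wf.mul u → w = v.mul wg →
      max wf.breadth wg.breadth < w.breadth →
      w.breadth < wf.breadth + wg.breadth →
      TrivialMod lt (MonicVersion lt S) w (mulWordRight f u - mulWordLeft v g)) ∧
  (∀ f ∈ MonicVersion lt S, ∀ g ∈ MonicVersion lt S,
    ∀ (wf wg : OpWord Z) (q : StarWord Z),
      IsLeadingMonomial lt f wf → IsLeadingMonomial lt g wg →
      wf = q.subst wg →
      TrivialMod lt (MonicVersion lt S) wf (f - q.substF g))

/-- `S_Φ(Z)`: all substitution instances in `kM(Z)` of OPIs from `Φ ⊆ kM(X)`. -/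
def SPhi {k X : Type} [Field k] (Φ : Set (kM k X)) (Z : Type) : Set (kM k Z) :=
  { f | ∃ φ ∈ Φ, ∃ σ : X → OpWord Z, f = substOPI σ φ }

/-- A system of OPIs `Φ` is Gröbner–Shirshov if for every set `Z` there is a
monomial order on `M(Z)` making `S_Φ(Z)` a Gröbner–Shirshov basis. -/
def GSOPI {k X : Type} [Field k] (Φ : Set (kM k X)) : Prop :=
  ∀ Z : Type, ∃ lt : OpWord Z → OpWord Z → Prop,
    IsMonomialOrder lt ∧ IsGSBasis lt (SPhi Φ Z)

/-- A system of OPIs `Φ` is convergent if for every set `Z` there is an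
orientation of `S_Φ(Z)` whose associated term-rewriting system is convergent. -/
def ConvergentOPI {k X : Type} [Field k] (Φ : Set (kM k X)) : Prop :=
  ∀ Z : Type, ∃ or : kM k Z → OpWord Z,
    IsOrientation (SPhi Φ Z) or ∧ ConvergentTRS (assocTRS (SPhi Φ Z) or)

/-- The first variable `x₁`. -/
def x1 : OpWord (Fin 2) := OpWord.var 0 OpWord.one

/-- The second variable `x₂`. -/
def x2 : OpWord (Fin 2) := OpWord.var 1 OpWord.one

/-- The averaging OPI `φ₁ = ⌊x₁⌋⌊x₂⌋ − ⌊⌊x₁⌋x₂⌋`. -/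
noncomputable def phi1 (k : Type) [Field k] : kM k (Fin 2) :=
  Finsupp.single ((OpWord.brk x1).mul (OpWord.brk x2)) 1
    - Finsupp.single (OpWord.brk ((OpWord.brk x1).mul x2)) 1

/-- The averaging OPI `φ₂ = ⌊x₁⌊x₂⌋⌋ − ⌊⌊x₁⌋x₂⌋`. -/
noncomputable def phi2 (k : Type) [Field k] : kM k (Fin 2) :=
  Finsupp.single (OpWord.brk (x1.mul (OpWord.brk x2))) 1
    - Finsupp.single (OpWord.brk ((OpWord.brk x1).mul x2)) 1

end RotaGS

namespace RotaGS

lemma substF_sub {k Z : Type} [Field k] (q : StarWord Z) (a b : kM k Z) :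
    q.substF (a - b) = q.substF a - q.substF b :=
  map_sub (Finsupp.mapDomain.addMonoidHom q.subst) a b

lemma substF_smul {k Z : Type} [Field k] (q : StarWord Z) (c : k) (a : kM k Z) :
    q.substF (c • a) = c • q.substF a :=
  Finsupp.mapDomain_smul c a

lemma substF_single {k Z : Type} [Field k] (q : StarWord Z) (w : OpWord Z) (c : k) :
    q.substF (Finsupp.single w c) = Finsupp.single (q.subst w) c :=
  Finsupp.mapDomain_single

/-- One rewriting step changes an element by a member of the operated ideal. -/
lemma oneStep_sub_mem {k Z : Type} [Field k] (lt : OpWord Z → OpWord Z → Prop)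
    (S : Set (kM k Z)) {f g : kM k Z} (h : OneStep (PiS lt S) f g) :
    f - g ∈ OpIdeal S := by
  obtain ⟨c, t, v, f', hc, hrule, ht, hf, hg⟩ := h
  obtain ⟨s, hs, w, hw, q, hpq⟩ := hrule
  have ht' : t = q.subst w := congrArg Prod.fst hpq
  have hv : v = q.substF (Rrem s w) := congrArg Prod.snd hpq
  have key : f - g = (c * (s w)⁻¹) • q.substF s := by
    subst hf hg ht' hv
    rw [add_sub_add_right_eq_sub]
    have h1 : Finsupp.single (q.subst w) c = c • Finsupp.single (q.subst w) (1 : k) := by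
      rw [Finsupp.smul_single', mul_one]
    rw [h1, ← smul_sub, ← substF_single q w (1 : k), ← substF_sub]
    have h2 : Finsupp.single w (1 : k) - Rrem s w = (s w)⁻¹ • s := by
      rw [Rrem, sub_sub_cancel]
    rw [h2, substF_smul, smul_smul]
  rw [key]
  exact Submodule.smul_mem _ _ (Submodule.subset_span ⟨s, hs, q, rfl⟩)

lemma rewrites_sub_mem {k Z : Type} [Field k] (lt : OpWord Z → OpWord Z → Prop)
    (S : Set (kM k Z)) {f g : kM k Z} (h : Rewrites (PiS lt S) f g) :
    f - g ∈ OpIdeal S := by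
  induction h with
  | refl => simpa using (OpIdeal S).zero_mem
  | tail _ hstep ih =>
    have := (OpIdeal S).add_mem ih (oneStep_sub_mem lt S hstep)
    simpa using this

/-- A normal form lies in the span of the irreducible words. -/
lemma normalForm_mem_span {k Z : Type} [Field k] (lt : OpWord Z → OpWord Z → Prop)
    (S : Set (kM k Z)) {g : kM k Z} (hnf : ∀ g', ¬ OneStep (PiS lt S) g g') :
    g ∈ spanSet k (IrrSet lt S) := by
  have hsupp : ∀ t ∈ g.support, t ∈ IrrSet lt S := by
    intro t htg
    by_contra hred
    simp only [IrrSet, Set.mem_setOf_eq, not_not] at hred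
    obtain ⟨s, hs, ws, hws, q, hq⟩ := hred
    refine hnf ((g t) • q.substF (Rrem s ws) + (g - Finsupp.single t (g t)))
      ⟨g t, t, q.substF (Rrem s ws), g - Finsupp.single t (g t), ?_, ?_, ?_, ?_, rfl⟩
    · exact Finsupp.mem_support_iff.mp htg
    · exact ⟨s, hs, ws, hws, q, by rw [hq]⟩
    · simp
    · ext x
      by_cases hx : x = t <;> simp [Finsupp.single_apply, hx]
  have : g = ∑ t ∈ g.support, (g t) • Finsupp.single t (1 : k) := by
    conv_lhs => rw [← Finsupp.sum_single g]
    rw [Finsupp.sum]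
    refine Finset.sum_congr rfl fun t _ => ?_
    rw [Finsupp.smul_single', mul_one]
  rw [this]
  exact Submodule.sum_mem _ fun t htg =>
    Submodule.smul_mem _ _ (Submodule.subset_span ⟨t, hsupp t htg, rfl⟩)

/-- Termination gives well-foundedness of the converse of one-step rewriting. -/
lemma terminating_wf {k W : Type} [Field k] {R : Set (W × (W →₀ k))}
    (hterm : Terminating R) :
    WellFounded (fun a b : W →₀ k => OneStep R b a) := by
  set rel : (W →₀ k) → (W →₀ k) → Prop := fun a b => OneStep R b a with hrel
  by_contra hwf
  have key : ∀ x : W →₀ k, ¬ Acc rel x → ∃ y, OneStep R x y ∧ ¬ Acc rel y := by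
    intro x hx
    by_contra h
    push_neg at h
    exact hx (Acc.intro x fun y hy => h y hy)
  have : ∃ x : W →₀ k, ¬ Acc rel x := by
    by_contra h
    push_neg at h
    exact hwf ⟨h⟩
  obtain ⟨a, ha⟩ := this
  let F : {x : W →₀ k // ¬ Acc rel x} → {x : W →₀ k // ¬ Acc rel x} :=
    fun p => ⟨(key p.1 p.2).choose, (key p.1 p.2).choose_spec.2⟩
  let seq : ℕ → {x : W →₀ k // ¬ Acc rel x} := fun n => F^[n] ⟨a, ha⟩
  refine hterm ⟨fun n => (seq n).1, fun n => ?_⟩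
  have hstep : seq (n + 1) = F (seq n) := Function.iterate_succ_apply' F n _
  show OneStep R (seq n).1 (seq (n+1)).1
  rw [hstep]
  exact (key (seq n).1 (seq n).2).choose_spec.1

/-- Under termination, every element rewrites to some normal form. -/
lemma exists_normalForm {k W : Type} [Field k] {R : Set (W × (W →₀ k))}
    (hterm : Terminating R) (f : W →₀ k) :
    ∃ g, Rewrites R f g ∧ ∀ g', ¬ OneStep R g g' := by
  induction f using WellFounded.induction (terminating_wf hterm) with
  | _ f ih =>
    by_cases hnf : ∀ g', ¬ OneStep R f g'
    · exact ⟨f, Relation.ReflTransGen.refl, hnf⟩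
    · push_neg at hnf
      obtain ⟨g, hg⟩ := hnf
      obtain ⟨h, hgh, hnfh⟩ := ih g hg
      exact ⟨h, Relation.ReflTransGen.head hg hgh, hnfh⟩

/-- Let `Z` be a set, `≤` a linear order on `M(Z)`, `S ⊆ kM(Z)`
monicized with respect to `≤`, and `Π_S` the term-rewriting system from `≤`.
If `Π_S` is terminating and `Id(S) ∩ k·Irr(S) = 0`, then `Π_S` is confluent. -/
theorem terminating_inf_irr_confluent {k Z : Type} [Field k]
    (lt : OpWord Z → OpWord Z → Prop) (hlin : IsStrictTotalOrder (OpWord Z) lt)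
    (S : Set (kM k Z)) (hm : Monicized lt S)
    (hterm : Terminating (PiS lt S))
    (hcap : OpIdeal S ⊓ spanSet k (IrrSet lt S) = ⊥) :
    Confluent (PiS lt S) := by
  -- normal forms reachable from a common element are equal
  have uniq : ∀ f h₁ h₂ : kM k Z,
      Rewrites (PiS lt S) f h₁ → Rewrites (PiS lt S) f h₂ →
      (∀ g', ¬ OneStep (PiS lt S) h₁ g') → (∀ g', ¬ OneStep (PiS lt S) h₂ g') →
      h₁ = h₂ := by
    intro f h₁ h₂ hf1 hf2 hnf1 hnf2
    have hid : h₁ - h₂ ∈ OpIdeal S := by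
      have h1 := rewrites_sub_mem lt S hf1
      have h2 := rewrites_sub_mem lt S hf2
      have := (OpIdeal S).sub_mem h2 h1
      simpa using this
    have hspan : h₁ - h₂ ∈ spanSet k (IrrSet lt S) :=
      (spanSet k (IrrSet lt S)).sub_mem (normalForm_mem_span lt S hnf1)
        (normalForm_mem_span lt S hnf2)
    have : h₁ - h₂ ∈ (⊥ : Submodule k (kM k Z)) := by
      rw [← hcap]; exact ⟨hid, hspan⟩
    have := Submodule.mem_bot k |>.mp this
    exact sub_eq_zero.mp this
  intro f g₁ g₂ hfg₁ hfg₂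
  obtain ⟨h₁, hg₁h, hnf1⟩ := exists_normalForm hterm g₁
  obtain ⟨h₂, hg₂h, hnf2⟩ := exists_normalForm hterm g₂
  have heq : h₁ = h₂ :=
    uniq f h₁ h₂ (hfg₁.trans hg₁h) (hfg₂.trans hg₂h) hnf1 hnf2
  exact ⟨h₁, hg₁h, heq ▸ hg₂h⟩

end RotaGS
end

section
/- Let Z be a set, ≤ a monomial order on M(Z), S ⊆ kM(Z) monicized with respect to ≤, and Π_S the term-rewriting system from ≤. Then the following statements are equivalent: (1) Π_S is convergent; (2) Π_S is confluent; (3) Id(S) ∩ k·Irr(S) = 0; (4) kM(Z) = Id(S) ⊕ k·Irr(S); (5) S is a Gröbner–Shirshov basis in kM(Z) with respect to ≤. Here Irr(S) = M(Z) ∖ { q|_{lm(s)} : q ∈ M^⋆(Z), s ∈ S }. -/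
namespace RotaGS

/-! ### Auxiliary development -/

section Aux

variable {Z : Type}

namespace OpWord

theorem one_mul' (w : OpWord Z) : OpWord.one.mul w = w := rfl

theorem mul_one' (w : OpWord Z) : w.mul OpWord.one = w := by
  induction w with
  | one => rfl
  | var z u ih => show var z (u.mul one) = _ ; rw [ih]
  | brkCons b u _ ih => show brkCons b (u.mul one) = _ ; rw [ih]

theorem mul_assoc' (a b c : OpWord Z) : (a.mul b).mul c = a.mul (b.mul c) := by
  induction a with
  | one => rfl
  | var z u ih => show var z ((u.mul b).mul c) = _ ; rw [ih]; rfl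
  | brkCons d u _ ih => show brkCons d ((u.mul b).mul c) = _ ; rw [ih]; rfl

/-- Total number of letters (at all depths). -/
def size : OpWord Z → ℕ
  | one => 0
  | var _ w => 1 + size w
  | brkCons b w => 1 + size b + size w

theorem size_mul (a b : OpWord Z) : (a.mul b).size = a.size + b.size := by
  induction a with
  | one => simp [size, mul]
  | var z u ih => show size (var z (u.mul b)) = _ ; simp [size, ih]; omega
  | brkCons d u _ ih => show size (brkCons d (u.mul b)) = _ ; simp [size, ih]; omega

theorem mul_right_cancel {a a' u : OpWord Z} (h : a.mul u = a'.mul u) : a = a' := by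
  induction a generalizing a' with
  | one =>
    cases a' with
    | one => rfl
    | var z w => exfalso; apply_fun size at h; simp [size_mul, size] at h
    | brkCons b w => exfalso; apply_fun size at h; simp [size_mul, size] at h
  | var z w ih =>
    cases a' with
    | one => exfalso; apply_fun size at h; simp [size_mul, size] at h
    | var z' w' =>
      simp only [mul] at h
      obtain ⟨h1, h2⟩ := OpWord.var.inj h
      rw [h1, ih h2]
    | brkCons b w' => exact absurd h (by simp [mul])
  | brkCons b w _ ih =>
    cases a' with
    | one => exfalso; apply_fun size at h; simp [size_mul, size] at h
    | var z' w' => exact absurd h (by simp [mul])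
    | brkCons b' w' =>
      simp only [mul] at h
      obtain ⟨h1, h2⟩ := OpWord.brkCons.inj h
      rw [h1, ih h2]

theorem mul_left_cancel {v a a' : OpWord Z} (h : v.mul a = v.mul a') : a = a' := by
  induction v with
  | one => exact h
  | var z w ih => exact ih (OpWord.var.inj h).2
  | brkCons b w _ ih => exact ih (OpWord.brkCons.inj h).2

theorem breadth_mul (a b : OpWord Z) : (a.mul b).breadth = a.breadth + b.breadth := by
  induction a with
  | one => simp [breadth, mul]
  | var z u ih => show breadth (var z (u.mul b)) = _ ; simp [breadth, ih]; omega
  | brkCons d u _ ih => show breadth (brkCons d (u.mul b)) = _ ; simp [breadth, ih]; omega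

end OpWord

namespace StarWord

theorem subst_injective (q : StarWord Z) : Function.Injective q.subst := by
  induction q with
  | star => exact fun a b h => h
  | brk q ih =>
    intro a b hab
    exact ih (by simpa [StarWord.subst, OpWord.brk] using hab)
  | mul a q b ih =>
    intro x y hxy
    simp only [StarWord.subst] at hxy
    exact ih (OpWord.mul_right_cancel (OpWord.mul_left_cancel hxy))

/-- Composition of star words: plug `p` into the star of `q`. -/
def comp : StarWord Z → StarWord Z → StarWord Z
  | star, p => p
  | brk q, p => brk (q.comp p)
  | mul a q b, p => mul a (q.comp p) b

theorem subst_comp (q p : StarWord Z) (u : OpWord Z) :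
    (q.comp p).subst u = q.subst (p.subst u) := by
  induction q with
  | star => rfl
  | brk q ih => simp [comp, StarWord.subst, ih]
  | mul a q b ih => simp [comp, StarWord.subst, ih]

end StarWord

end Aux
section Aux2

variable {k Z : Type} [Field k]
variable {lt : OpWord Z → OpWord Z → Prop}

namespace StarWord

theorem substF_sub (q : StarWord Z) (a b : kM k Z) :
    q.substF (a - b) = q.substF a - q.substF b := by
  simp only [StarWord.substF, sub_eq_add_neg, Finsupp.mapDomain_add]
  congr 1
  rw [show (-b : kM k Z) = (-1 : k) • b by simp, Finsupp.mapDomain_smul]; simp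

theorem substF_add (q : StarWord Z) (a b : kM k Z) :
    q.substF (a + b) = q.substF a + q.substF b := Finsupp.mapDomain_add

theorem substF_smul (q : StarWord Z) (c : k) (a : kM k Z) :
    q.substF (c • a) = c • q.substF a := Finsupp.mapDomain_smul _ _

theorem substF_single (q : StarWord Z) (w : OpWord Z) (c : k) :
    q.substF (Finsupp.single w c) = Finsupp.single (q.subst w) c :=
  Finsupp.mapDomain_single

theorem substF_apply_subst (q : StarWord Z) (s : kM k Z) (x : OpWord Z) :
    (q.substF s) (q.subst x) = s x :=
  Finsupp.mapDomain_apply q.subst_injective s x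

theorem support_substF (q : StarWord Z) (s : kM k Z) :
    ∀ x ∈ (q.substF s).support, ∃ y ∈ s.support, x = q.subst y := by
  classical
  intro x hx
  have := Finsupp.mapDomain_support (f := q.subst) (s := s) hx
  simpa [eq_comm] using Finset.mem_image.1 this

theorem substF_comp (q p : StarWord Z) (s : kM k Z) :
    (q.comp p).substF s = q.substF (p.substF s) := by
  simp only [StarWord.substF]
  rw [show (q.comp p).subst = q.subst ∘ p.subst from funext (subst_comp q p),
    Finsupp.mapDomain_comp]

theorem substF_congr {q q' : StarWord Z} (hq : ∀ x, q.subst x = q'.subst x)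
    (s : kM k Z) : q.substF s = q'.substF s := by
  simp only [StarWord.substF]; rw [funext hq]

end StarWord

section OrderFacts

variable (hlt : IsMonomialOrder lt)
include hlt

theorem lt_trans'' {a b c : OpWord Z} : lt a b → lt b c → lt a c :=
  fun h1 h2 => by haveI := hlt.wellOrder; exact trans_of lt h1 h2

theorem lt_irrefl'' (a : OpWord Z) : ¬ lt a a := by
  haveI := hlt.wellOrder
  exact irrefl_of lt a

theorem lt_asymm'' {a b : OpWord Z} : lt a b → ¬ lt b a := by
  intro h1 h2
  exact lt_irrefl'' hlt a (lt_trans'' hlt h1 h2)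

theorem lt_trichot {a b : OpWord Z} : lt a b ∨ a = b ∨ lt b a :=
  by haveI := hlt.wellOrder; exact trichotomous_of lt a b

theorem lt_of_ne {a b : OpWord Z} (hne : a ≠ b) (hnlt : ¬ lt a b) : lt b a := by
  rcases lt_trichot hlt (a := a) (b := b) with h1 | h1 | h1
  · exact absurd h1 hnlt
  · exact absurd h1 hne
  · exact h1

/-- A finite nonempty set of words has a maximum. -/
theorem exists_max_finset (A : Finset (OpWord Z)) (hA : A.Nonempty) :
    ∃ t ∈ A, ∀ x ∈ A, x ≠ t → lt x t := by
  classical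
  induction A using Finset.induction_on with
  | empty => exact absurd hA (by simp)
  | @insert a A ha ih =>
    rcases A.eq_empty_or_nonempty with rfl | hA'
    · exact ⟨a, by simp, by simp⟩
    · obtain ⟨t, htA, ht⟩ := ih hA'
      rcases lt_trichot hlt (a := a) (b := t) with h1 | h1 | h1
      · refine ⟨t, by simp [htA], ?_⟩
        intro x hx hxt
        rcases Finset.mem_insert.1 hx with rfl | hx
        · exact h1
        · exact ht x hx hxt
      · subst h1
        refine ⟨a, by simp, ?_⟩
        intro x hx hxt
        rcases Finset.mem_insert.1 hx with rfl | hx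
        · exact absurd rfl hxt
        · exact ht x hx hxt
      · refine ⟨a, by simp, ?_⟩
        intro x hx hxa
        rcases Finset.mem_insert.1 hx with rfl | hx
        · exact absurd rfl hxa
        · rcases eq_or_ne x t with rfl | hxt
          · exact h1
          · exact lt_trans'' hlt (ht x hx hxt) h1

theorem lm_unique {f : kM k Z} {w w' : OpWord Z}
    (h1 : IsLeadingMonomial lt f w) (h2 : IsLeadingMonomial lt f w') : w = w' := by
  by_contra hne
  exact lt_asymm'' hlt (h1.2 w' h2.1 (Ne.symm hne)) (h2.2 w h1.1 hne)

theorem lm_exists {f : kM k Z} (hf : f ≠ 0) : ∃ w, IsLeadingMonomial lt f w := by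
  obtain ⟨t, ht, hmax⟩ := exists_max_finset hlt f.support (Finsupp.support_nonempty_iff.2 hf)
  exact ⟨t, ht, hmax⟩

end OrderFacts

end Aux2
section Aux3

variable {k Z : Type} [Field k]
variable {lt : OpWord Z → OpWord Z → Prop} {S : Set (kM k Z)}

/-- `t` is reducible. -/
def Red (lt : OpWord Z → OpWord Z → Prop) (S : Set (kM k Z)) (t : OpWord Z) : Prop :=
  ∃ s ∈ S, ∃ ws, IsLeadingMonomial lt s ws ∧ ∃ q : StarWord Z, t = q.subst ws

theorem irrSet_eq : IrrSet lt S = { w | ¬ Red lt S w } := rfl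

theorem red_iff_rule {t : OpWord Z} :
    Red lt S t ↔ ∃ v, (t, v) ∈ PiS lt S := by
  constructor
  · rintro ⟨s, hs, ws, hws, q, rfl⟩
    exact ⟨q.substF (Rrem s ws), s, hs, ws, hws, q, rfl⟩
  · rintro ⟨v, s, hs, w, hw, q, hq⟩
    obtain ⟨h1, _⟩ := Prod.mk.injEq .. ▸ hq
    exact ⟨s, hs, w, hw, q, congrArg Prod.fst hq⟩

variable (hlt : IsMonomialOrder lt) (hm : Monicized lt S)
include hlt hm

theorem monicVersion_eq : MonicVersion lt S = S := by
  ext f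
  constructor
  · rintro ⟨s, hs, w, hw, rfl⟩
    obtain ⟨w', hw', hsw'⟩ := hm s hs
    rw [lm_unique hlt hw hw', hsw', inv_one, one_smul]; exact hs
  · intro hf
    obtain ⟨w, hw, hsw⟩ := hm f hf
    exact ⟨f, hf, w, hw, by rw [hsw, inv_one, one_smul]⟩

/-- Structure of rules of `Π_S`. -/
theorem rule_spec {t : OpWord Z} {v : kM k Z} (hr : (t, v) ∈ PiS lt S) :
    (∀ x ∈ v.support, lt x t) ∧
    ∃ s ∈ S, ∃ w, IsLeadingMonomial lt s w ∧ ∃ q : StarWord Z,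
      t = q.subst w ∧ Finsupp.single t (1 : k) - v = q.substF s := by
  obtain ⟨s, hs, w, hw, q, hq⟩ := hr
  have ht : t = q.subst w := congrArg Prod.fst hq
  have hv : v = q.substF (Rrem s w) := congrArg Prod.snd hq
  obtain ⟨w', hw', hsw'⟩ := hm s hs
  have hsw : s w = 1 := by rw [lm_unique hlt hw hw']; exact hsw'
  have hRr : Rrem s w = Finsupp.single w 1 - s := by
    rw [Rrem, hsw, inv_one, one_smul]
  have hsupp : ∀ x ∈ v.support, lt x t := by
    intro x hx
    rw [hv] at hx
    obtain ⟨y, hy, rfl⟩ := StarWord.support_substF q _ x hx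
    have hyw : y ≠ w := by
      intro h; subst h
      rw [hRr] at hy
      simp [Finsupp.mem_support_iff, hsw] at hy
    have hys : y ∈ s.support := by
      rw [hRr] at hy
      rw [Finsupp.mem_support_iff] at hy ⊢
      intro h0
      apply hy
      simp [Finsupp.single_apply, Ne.symm hyw, h0]
    have := hw.2 y hys hyw
    rw [ht]
    exact hlt.compat q y w this
  refine ⟨hsupp, s, hs, w, hw, q, ht, ?_⟩
  rw [hv, hRr, StarWord.substF_sub, StarWord.substF_single, ht]
  abel

theorem rule_not_mem_supp {t : OpWord Z} {v : kM k Z} (hr : (t, v) ∈ PiS lt S) :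
    v t = 0 := by
  by_contra h0
  exact lt_irrefl'' hlt t ((rule_spec hlt hm hr).1 t (Finsupp.mem_support_iff.2 h0))

theorem rule_diff_mem {t : OpWord Z} {v : kM k Z} (hr : (t, v) ∈ PiS lt S) :
    Finsupp.single t (1 : k) - v ∈ OpIdeal S := by
  obtain ⟨-, s, hs, w, hw, q, -, hq⟩ := rule_spec hlt hm hr
  rw [hq]
  exact Submodule.subset_span ⟨s, hs, q, rfl⟩

/-- Analysis of a one-step rewriting. -/
theorem onestep_spec {f g : kM k Z} (hst : OneStep (PiS lt S) f g) :
    ∃ (t : OpWord Z) (c : k) (v : kM k Z), (t, v) ∈ PiS lt S ∧ c ≠ 0 ∧ f t = c ∧ g t = 0 ∧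
      f - g = c • (Finsupp.single t 1 - v) ∧
      (∀ x, lt t x → g x = f x) ∧
      (∀ x ∈ g.support, lt x t ∨ (x ∈ f.support ∧ x ≠ t)) ∧
      t ∈ f.support := by
  obtain ⟨c, t, v, f', hc, hrule, htf', hf, hg⟩ := hst
  have hf't : f' t = 0 := Finsupp.notMem_support_iff.1 htf'
  have hvt : v t = 0 := rule_not_mem_supp hlt hm hrule
  have hvlt : ∀ x ∈ v.support, lt x t := (rule_spec hlt hm hrule).1
  have hft : f t = c := by simp [hf, Finsupp.single_apply, hf't]
  have hgt : g t = 0 := by simp [hg, hvt, hf't]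
  refine ⟨t, c, v, hrule, hc, hft, hgt, ?_, ?_, ?_, ?_⟩
  · rw [hf, hg]; ext x
    rcases eq_or_ne x t with rfl | hxt
    · simp; ring
    · simp [Finsupp.single_eq_of_ne' (Ne.symm hxt)]
  · intro x hx
    have hxt : x ≠ t := fun h => lt_irrefl'' hlt t (h ▸ hx)
    have hvx : v x = 0 := by
      by_contra h0
      exact lt_asymm'' hlt hx (hvlt x (Finsupp.mem_support_iff.2 h0))
    simp [hf, hg, hvx, Finsupp.single_apply, Ne.symm hxt]
  · intro x hx
    rw [Finsupp.mem_support_iff] at hx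
    by_cases hvx : v x = 0
    · have hxt : x ≠ t := by
        intro h; subst h; rw [hgt] at hx; exact hx rfl
      refine Or.inr ⟨Finsupp.mem_support_iff.2 ?_, hxt⟩
      have : g x = f x := by
        simp [hf, hg, hvx, Finsupp.single_apply, Ne.symm hxt]
      rwa [← this]
    · exact Or.inl (hvlt x (Finsupp.mem_support_iff.2 hvx))
  · rw [Finsupp.mem_support_iff, hft]; exact hc

theorem onestep_prec {f g : kM k Z} (hst : OneStep (PiS lt S) f g) :
    ∃ t, (∀ x, lt t x → g x = f x) ∧ g t = 0 ∧ f t ≠ 0 := by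
  obtain ⟨t, c, v, _, hc, hft, hgt, _, habove, _, _⟩ := onestep_spec hlt hm hst
  exact ⟨t, habove, hgt, hft ▸ hc⟩

omit hm in
/-- The relation `prec` is well-founded (lexicographic comparison from the top). -/
theorem prec_wf :
    WellFounded (fun (g f : kM k Z) =>
      ∃ t, (∀ x, lt t x → g x = f x) ∧ g t = 0 ∧ f t ≠ 0) := by
  classical
  set s' : k → k → Prop := fun a b => a = 0 ∧ b ≠ 0 with hs'
  have hacc0 : Acc s' 0 := Acc.intro 0 (fun c hc => absurd rfl hc.2)
  have hswf : WellFounded s' := by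
    constructor
    intro a
    exact Acc.intro a (fun b hb => hb.1 ▸ hacc0)
  have hbot : ∀ ⦃n : k⦄, ¬ s' n 0 := fun n hn => hn.2 rfl
  haveI : IsTrichotomous (OpWord Z) (Function.swap lt) :=
    ⟨fun a b hab hba => by
      rcases lt_trichot hlt (a := a) (b := b) with h1 | h1 | h1
      · exact absurd h1 hba
      · exact h1
      · exact absurd h1 hab⟩
  have hlex : WellFounded (Finsupp.Lex (Function.swap lt) s') :=
    Finsupp.Lex.wellFounded' hbot hswf hlt.wellOrder.wf
  refine Subrelation.wf ?_ hlex
  rintro g f ⟨t, habove, hgt, hft⟩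
  exact ⟨t, fun b hb => habove b hb, ⟨hgt, hft⟩⟩

theorem terminating_PiS : Terminating (PiS lt S) := by
  rintro ⟨seq, hseq⟩
  have hwf := prec_wf (k := k) hlt
  obtain ⟨m, ⟨n, rfl⟩, hmin⟩ := hwf.has_min (Set.range seq) ⟨seq 0, 0, rfl⟩
  exact hmin (seq (n + 1)) ⟨n + 1, rfl⟩ (onestep_prec hlt hm (hseq n))

end Aux3
section Aux4

variable {k Z : Type} [Field k]
variable {W : Type}

theorem joinable_refl (R : Set (W × (W →₀ k))) (a : W →₀ k) : Joinable R a a :=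
  ⟨a, Relation.ReflTransGen.refl, Relation.ReflTransGen.refl⟩

theorem joinable_symm {R : Set (W × (W →₀ k))} {a b : W →₀ k} :
    Joinable R a b → Joinable R b a := fun ⟨u, h1, h2⟩ => ⟨u, h2, h1⟩

theorem joinable_trans {R : Set (W × (W →₀ k))} (hc : Confluent R) {a b c : W →₀ k} :
    Joinable R a b → Joinable R b c → Joinable R a c := by
  rintro ⟨u, hau, hbu⟩ ⟨w, hbw, hcw⟩
  obtain ⟨x, hux, hwx⟩ := hc hbu hbw
  exact ⟨x, hau.trans hux, hcw.trans hwx⟩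

theorem not_onestep_zero {R : Set (W × (W →₀ k))} {g : W →₀ k} :
    ¬ OneStep R (0 : W →₀ k) g := by
  rintro ⟨c, t, v, f', hc, -, htf', hf, -⟩
  have : (0 : W →₀ k) t = c + f' t := by rw [hf]; simp
  rw [Finsupp.notMem_support_iff.1 htf'] at this
  simp at this
  exact hc this.symm

theorem rewrites_zero_eq {R : Set (W × (W →₀ k))} {g : W →₀ k}
    (h : Rewrites R (0 : W →₀ k) g) : g = 0 := by
  induction h with
  | refl => rfl
  | tail h1 h2 ih => rw [ih] at h2; exact absurd h2 not_onestep_zero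

variable {lt : OpWord Z → OpWord Z → Prop} {S : Set (kM k Z)}
variable (hlt : IsMonomialOrder lt) (hm : Monicized lt S)
include hlt hm

/-- Key joinability lemma: adding a multiple of a rule difference keeps joinability. -/
theorem joinable_add_rule {t : OpWord Z} {v : kM k Z} (hr : (t, v) ∈ PiS lt S)
    (c : k) (f : kM k Z) :
    Joinable (PiS lt S) (f + c • (Finsupp.single t 1 - v)) f := by
  rcases eq_or_ne c 0 with rfl | hc
  · simpa using joinable_refl (PiS lt S) f
  have hvt : v t = 0 := rule_not_mem_supp hlt hm hr
  by_cases hd : f t + c = 0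
  · -- f rewrites in one step to f + c • (single t 1 - v)
    have hft : f t ≠ 0 := fun h0 => hc (by simpa [h0] using hd)
    have hft' : f t = -c := eq_neg_of_add_eq_zero_left hd
    refine ⟨f + c • (Finsupp.single t 1 - v), Relation.ReflTransGen.refl,
      Relation.ReflTransGen.single ?_⟩
    refine ⟨f t, t, v, f - Finsupp.single t (f t), hft, hr, ?_, by abel, ?_⟩
    · rw [Finsupp.notMem_support_iff]; simp
    · ext x
      rcases eq_or_ne x t with rfl | hxt
      · simp [hvt, hft'] <;> ring
      · simp [Finsupp.single_eq_of_ne' (Ne.symm hxt), hft'] <;> ring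
  · set e := f t • v + (f - Finsupp.single t (f t)) with he
    have step1 : OneStep (PiS lt S) (f + c • (Finsupp.single t 1 - v)) e := by
      refine ⟨f t + c, t, v, f - Finsupp.single t (f t) - c • v, hd, hr, ?_, ?_, ?_⟩
      · rw [Finsupp.notMem_support_iff]; simp [hvt]
      · ext x
        rcases eq_or_ne x t with rfl | hxt
        · simp [hvt] <;> ring
        · simp [Finsupp.single_eq_of_ne' (Ne.symm hxt)] <;> ring
      · rw [he]
        ext x
        rcases eq_or_ne x t with rfl | hxt
        · simp [hvt] <;> ring
        · simp [Finsupp.single_eq_of_ne' (Ne.symm hxt)] <;> ring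
    by_cases hft : f t = 0
    · have : e = f := by rw [he, hft]; simp
      exact ⟨f, Relation.ReflTransGen.single (this ▸ step1), Relation.ReflTransGen.refl⟩
    · have step2 : OneStep (PiS lt S) f e := by
        refine ⟨f t, t, v, f - Finsupp.single t (f t), hft, hr, ?_, by abel, rfl⟩
        rw [Finsupp.notMem_support_iff]; simp
      exact ⟨e, Relation.ReflTransGen.single step1, Relation.ReflTransGen.single step2⟩

omit hlt in
theorem gen_eq_rule_diff {s : kM k Z} (hs : s ∈ S) (q : StarWord Z) :
    ∃ (t : OpWord Z) (v : kM k Z), (t, v) ∈ PiS lt S ∧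
      q.substF s = Finsupp.single t 1 - v := by
  obtain ⟨w, hw, hsw⟩ := hm s hs
  refine ⟨q.subst w, q.substF (Rrem s w), ⟨s, hs, w, hw, q, rfl⟩, ?_⟩
  rw [Rrem, hsw, inv_one, one_smul, StarWord.substF_sub, StarWord.substF_single]
  abel

theorem joinable_add_ideal (hcf : Confluent (PiS lt S)) {x : kM k Z}
    (hx : x ∈ OpIdeal S) : ∀ (f : kM k Z) (c : k), Joinable (PiS lt S) (f + c • x) f := by
  refine Submodule.span_induction ?_ ?_ ?_ ?_ hx
  · rintro y ⟨s, hs, q, rfl⟩ f c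
    obtain ⟨t, v, hrule, heq⟩ := gen_eq_rule_diff hm hs q
    rw [heq]
    exact joinable_add_rule hlt hm hrule c f
  · intro f c; simpa using joinable_refl (PiS lt S) f
  · intro x y _ _ hxj hyj f c
    have h1 : Joinable (PiS lt S) ((f + c • x) + c • y) (f + c • x) := hyj (f + c • x) c
    have h2 := hxj f c
    have : f + c • (x + y) = (f + c • x) + c • y := by rw [smul_add]; abel
    rw [this]
    exact joinable_trans hcf h1 h2
  · intro a x _ hxj f c
    have : f + c • (a • x) = f + (c * a) • x := by rw [smul_smul]
    rw [this]
    exact hxj f (c * a)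

theorem mem_ideal_rewrites_zero (hcf : Confluent (PiS lt S)) {x : kM k Z}
    (hx : x ∈ OpIdeal S) : Rewrites (PiS lt S) x 0 := by
  have := joinable_add_ideal hlt hm hcf hx 0 1
  simp only [one_smul, zero_add] at this
  obtain ⟨u, h1, h2⟩ := this
  rwa [rewrites_zero_eq h2] at h1

omit hlt hm in
theorem mem_spanSet_iff {T : Set (OpWord Z)} {f : kM k Z} :
    f ∈ spanSet k T ↔ ∀ x ∈ f.support, x ∈ T := by
  rw [spanSet, ← Finsupp.supported_eq_span_single]
  rw [Finsupp.mem_supported]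
  constructor
  · intro hsub x hx; exact hsub hx
  · intro hsub x hx; exact hsub x hx

theorem nf_of_irr {f : kM k Z} (hf : ∀ x ∈ f.support, ¬ Red lt S x) {g : kM k Z} :
    ¬ OneStep (PiS lt S) f g := by
  intro hst
  obtain ⟨t, c, v, hrule, -, -, -, -, -, -, htf⟩ := onestep_spec hlt hm hst
  exact hf t htf (red_iff_rule.2 ⟨v, hrule⟩)

theorem rewrites_eq_of_nf {f g : kM k Z} (hf : ∀ x ∈ f.support, ¬ Red lt S x)
    (h : Rewrites (PiS lt S) f g) : g = f := by
  induction h using Relation.ReflTransGen.head_induction_on with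
  | refl => rfl
  | head hstep _ _ => exact absurd hstep (nf_of_irr hlt hm hf)

theorem mem_id_of_rewrites {f g : kM k Z} (h : Rewrites (PiS lt S) f g) :
    f - g ∈ OpIdeal S := by
  induction h with
  | refl => simp
  | tail h1 h2 ih =>
    rename_i b c
    obtain ⟨t, c', v, hrule, -, -, -, hdiff, -, -, -⟩ := onestep_spec hlt hm h2
    have hbc : b - c ∈ OpIdeal S := hdiff ▸ Submodule.smul_mem _ _ (rule_diff_mem hlt hm hrule)
    have : f - c = (f - b) + (b - c) := by abel
    rw [this]
    exact Submodule.add_mem _ ih hbc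

/-- Every element rewrites to a normal form. -/
theorem exists_nf (f : kM k Z) :
    ∃ g, Rewrites (PiS lt S) f g ∧ ∀ x ∈ g.support, ¬ Red lt S x := by
  classical
  have main : ∀ t : OpWord Z, ∀ f : kM k Z,
      (∀ x ∈ f.support, Red lt S x → (lt x t ∨ x = t)) →
      ∃ g, Rewrites (PiS lt S) f g ∧ ∀ x ∈ g.support, ¬ Red lt S x := by
    intro t
    induction t using WellFounded.induction hlt.wellOrder.wf with
    | _ t ih =>
    intro f hbound
    by_cases hex : ∃ x ∈ f.support, Red lt S x
    · set A := f.support.filter (fun x => Red lt S x) with hA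
      have hAne : A.Nonempty := by
        obtain ⟨x, hx, hred⟩ := hex
        exact ⟨x, Finset.mem_filter.2 ⟨hx, hred⟩⟩
      obtain ⟨ts, htsA, hmax⟩ := exists_max_finset hlt A hAne
      have htsf : ts ∈ f.support := (Finset.mem_filter.1 htsA).1
      have htsred : Red lt S ts := (Finset.mem_filter.1 htsA).2
      obtain ⟨v, hrule⟩ := red_iff_rule.1 htsred
      set g1 := f ts • v + (f - Finsupp.single ts (f ts)) with hg1
      have hstep : OneStep (PiS lt S) f g1 := by
        refine ⟨f ts, ts, v, f - Finsupp.single ts (f ts),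
          Finsupp.mem_support_iff.1 htsf, hrule, ?_, by abel, rfl⟩
        rw [Finsupp.notMem_support_iff]; simp
      have hg1bound : ∀ x ∈ g1.support, Red lt S x → lt x ts := by
        intro x hx hred
        have hxsup := Finsupp.mem_support_iff.1 hx
        by_cases hvx : v x = 0
        · have hxts : x ≠ ts := by
            intro hh; subst hh
            apply hxsup
            rw [hg1]
            simp [rule_not_mem_supp hlt hm hrule]
          have hxf : x ∈ f.support := by
            rw [Finsupp.mem_support_iff]
            intro h0
            apply hxsup
            rw [hg1]
            simp [hvx, h0, Finsupp.single_eq_of_ne' (Ne.symm hxts)]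
          exact hmax x (Finset.mem_filter.2 ⟨hxf, hred⟩) hxts
        · exact (rule_spec hlt hm hrule).1 x (Finsupp.mem_support_iff.2 hvx)
      by_cases hex2 : ∃ x ∈ g1.support, Red lt S x
      · obtain ⟨x2, hx2, hred2⟩ := hex2
        have hx2ts : lt x2 ts := hg1bound x2 hx2 hred2
        have htst : lt ts t ∨ ts = t := hbound ts htsf htsred
        have hx2t : lt x2 t := by
          rcases htst with h' | h'
          · exact lt_trans'' hlt hx2ts h'
          · rw [← h']; exact hx2ts
        -- max reducible of g1 is ≤ x2's... use x2max
        set A2 := g1.support.filter (fun x => Red lt S x) with hA2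
        have hA2ne : A2.Nonempty := ⟨x2, Finset.mem_filter.2 ⟨hx2, hred2⟩⟩
        obtain ⟨t2, ht2A, hmax2⟩ := exists_max_finset hlt A2 hA2ne
        have ht2ts : lt t2 ts := hg1bound t2 (Finset.mem_filter.1 ht2A).1 (Finset.mem_filter.1 ht2A).2
        have ht2t : lt t2 t := by
          rcases htst with h' | h'
          · exact lt_trans'' hlt ht2ts h'
          · rw [← h']; exact ht2ts
        obtain ⟨g, hgre, hgnf⟩ := ih t2 ht2t g1 (by
          intro x hx hred
          rcases eq_or_ne x t2 with rfl | hxt2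
          · exact Or.inr rfl
          · exact Or.inl (hmax2 x (Finset.mem_filter.2 ⟨hx, hred⟩) hxt2))
        exact ⟨g, Relation.ReflTransGen.head hstep hgre, hgnf⟩
      · refine ⟨g1, Relation.ReflTransGen.single hstep, ?_⟩
        intro x hx hred
        exact hex2 ⟨x, hx, hred⟩
    · exact ⟨f, Relation.ReflTransGen.refl, fun x hx hred => hex ⟨x, hx, hred⟩⟩
  by_cases hex : ∃ x ∈ f.support, Red lt S x
  · obtain ⟨x0, hx0, hred0⟩ := hex
    set A := f.support.filter (fun x => Red lt S x) with hA
    obtain ⟨t0, ht0A, hmax0⟩ := exists_max_finset hlt A ⟨x0, Finset.mem_filter.2 ⟨hx0, hred0⟩⟩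
    refine main t0 f ?_
    intro x hx hred
    rcases eq_or_ne x t0 with rfl | hxt0
    · exact Or.inr rfl
    · exact Or.inl (hmax0 x (Finset.mem_filter.2 ⟨hx, hred⟩) hxt0)
  · exact ⟨f, Relation.ReflTransGen.refl, fun x hx hred => hex ⟨x, hx, hred⟩⟩

theorem confluent_imp_disjoint (hcf : Confluent (PiS lt S)) :
    OpIdeal S ⊓ spanSet k (IrrSet lt S) = ⊥ := by
  rw [eq_bot_iff]
  rintro f ⟨hfI, hfIrr⟩
  have hnf : ∀ x ∈ f.support, ¬ Red lt S x := by
    intro x hx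
    exact mem_spanSet_iff.1 hfIrr x hx
  have h0 : Rewrites (PiS lt S) f 0 := mem_ideal_rewrites_zero hlt hm hcf hfI
  have := rewrites_eq_of_nf hlt hm hnf h0
  simp [← this]

theorem disjoint_imp_confluent (hdis : OpIdeal S ⊓ spanSet k (IrrSet lt S) = ⊥) :
    Confluent (PiS lt S) := by
  intro f g1 g2 h1 h2
  obtain ⟨n1, hn1re, hn1nf⟩ := exists_nf hlt hm g1
  obtain ⟨n2, hn2re, hn2nf⟩ := exists_nf hlt hm g2
  have hd1 : f - n1 ∈ OpIdeal S := mem_id_of_rewrites hlt hm (h1.trans hn1re)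
  have hd2 : f - n2 ∈ OpIdeal S := mem_id_of_rewrites hlt hm (h2.trans hn2re)
  have hdn : n1 - n2 ∈ OpIdeal S := by
    have : n1 - n2 = (f - n2) - (f - n1) := by abel
    rw [this]
    exact Submodule.sub_mem _ hd2 hd1
  have hspan : n1 - n2 ∈ spanSet k (IrrSet lt S) := by
    rw [mem_spanSet_iff]
    intro x hx
    have := Finsupp.mem_support_iff.1 hx
    have hor : x ∈ n1.support ∨ x ∈ n2.support := by
      by_contra hcon
      push_neg at hcon
      apply this
      rw [Finsupp.sub_apply, Finsupp.notMem_support_iff.1 hcon.1,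
        Finsupp.notMem_support_iff.1 hcon.2]
      ring
    rw [irrSet_eq]
    rcases hor with hmem | hmem
    · exact hn1nf x hmem
    · exact hn2nf x hmem
  have : n1 - n2 = 0 := by
    have := hdis ▸ Submodule.mem_inf.2 ⟨hdn, hspan⟩
    simpa using this
  have heq : n1 = n2 := by
    have := sub_eq_zero.1 this
    exact this
  exact ⟨n1, hn1re, heq ▸ hn2re⟩

/-- Codisjointness always holds. -/
theorem codisjoint_id_irr : ∀ f : kM k Z, f ∈ OpIdeal S ⊔ spanSet k (IrrSet lt S) := by
  intro f
  obtain ⟨g, hre, hnf⟩ := exists_nf hlt hm f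
  have h1 : f - g ∈ OpIdeal S := mem_id_of_rewrites hlt hm hre
  have h2 : g ∈ spanSet k (IrrSet lt S) := by
    rw [mem_spanSet_iff]
    intro x hx
    rw [irrSet_eq]
    exact hnf x hx
  have : f = (f - g) + g := by abel
  rw [this]
  exact Submodule.add_mem _ (Submodule.mem_sup_left h1) (Submodule.mem_sup_right h2)

end Aux4
section Aux5

variable {k Z : Type} [Field k]
variable {lt : OpWord Z → OpWord Z → Prop} {S : Set (kM k Z)}

/-- The span of all `q|_s` with `q|_{lm s} < w`. -/
noncomputable def Tspan (lt : OpWord Z → OpWord Z → Prop) (S : Set (kM k Z)) (w : OpWord Z) :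
    Submodule k (kM k Z) :=
  Submodule.span k { x | ∃ s ∈ S, ∃ ws, IsLeadingMonomial lt s ws ∧
    ∃ q : StarWord Z, lt (q.subst ws) w ∧ x = q.substF s }

theorem trivialMod_iff_mem {w : OpWord Z} {h : kM k Z} :
    TrivialMod lt S w h ↔ h ∈ Tspan lt S w := by
  constructor
  · rintro ⟨n, c, q, s, hS, hlm, rfl⟩
    refine Submodule.sum_mem _ ?_
    intro i _
    refine Submodule.smul_mem _ _ (Submodule.subset_span ?_)
    obtain ⟨wi, hwi, hlti⟩ := hlm i
    exact ⟨s i, hS i, wi, hwi, q i, hlti, rfl⟩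
  · intro hmem
    obtain ⟨n, c, g, hsum⟩ := Submodule.mem_span_set'.1 hmem
    have hg : ∀ i : Fin n, ∃ s ∈ S, ∃ ws, IsLeadingMonomial lt s ws ∧
        ∃ q : StarWord Z, lt (q.subst ws) w ∧ (g i : kM k Z) = q.substF s :=
      fun i => (g i).2
    choose s hsS ws hws q hq hx using hg
    refine ⟨n, c, q, s, hsS, fun i => ⟨ws i, hws i, hq i⟩, ?_⟩
    rw [← hsum]
    congr 1
    funext i
    rw [hx i]

theorem tspan_push (hlt : IsMonomialOrder lt) (Q : StarWord Z) {w : OpWord Z} {h : kM k Z}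
    (hmem : h ∈ Tspan lt S w) : Q.substF h ∈ Tspan lt S (Q.subst w) := by
  refine Submodule.span_induction ?_ ?_ ?_ ?_ hmem
  · rintro x ⟨s, hs, ws, hws, q, hq, rfl⟩
    rw [← StarWord.substF_comp]
    exact Submodule.subset_span ⟨s, hs, ws, hws, Q.comp q,
      by rw [StarWord.subst_comp]; exact hlt.compat Q _ _ hq, rfl⟩
  · show Q.substF 0 ∈ _
    rw [StarWord.substF, Finsupp.mapDomain_zero]
    exact Submodule.zero_mem _
  · intro x y _ _ hx hy
    rw [StarWord.substF_add]
    exact Submodule.add_mem _ hx hy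
  · intro a x _ hx
    rw [StarWord.substF_smul]
    exact Submodule.smul_mem _ _ hx

variable (hlt : IsMonomialOrder lt) (hm : Monicized lt S)
include hlt hm

theorem rewrites_zero_mem_tspan {w : OpWord Z} {h : kM k Z}
    (hre : Rewrites (PiS lt S) h 0) (hsupp : ∀ x ∈ h.support, lt x w) :
    h ∈ Tspan lt S w := by
  revert hsupp
  induction hre using Relation.ReflTransGen.head_induction_on with
  | refl => exact fun _ => Submodule.zero_mem _
  | @head a c hstep hrest ih =>
    intro hsupp
    obtain ⟨t, c', v, hrule, hc', hft, hgt, hdiff, habove, hsuppc, htf⟩ :=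
      onestep_spec hlt hm hstep
    have htw : lt t w := hsupp t htf
    have hcbound : ∀ x ∈ c.support, lt x w := by
      intro x hx
      rcases hsuppc x hx with h' | ⟨h', -⟩
      · exact lt_trans'' hlt h' htw
      · exact hsupp x h'
    have hdmem : a - c ∈ Tspan lt S w := by
      obtain ⟨-, s, hs, w', hw', q, htq, hq⟩ := rule_spec hlt hm hrule
      rw [hdiff, hq]
      exact Submodule.smul_mem _ _ (Submodule.subset_span
        ⟨s, hs, w', hw', q, htq ▸ htw, rfl⟩)
    have : a = (a - c) + c := by abel
    rw [this]
    exact Submodule.add_mem _ hdmem (ih hcbound)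

end Aux5
section Aux6

variable {k Z : Type} [Field k]
variable {lt : OpWord Z → OpWord Z → Prop} {S : Set (kM k Z)}

theorem mulWordRight_eq (f : kM k Z) (u : OpWord Z) :
    mulWordRight f u = (StarWord.mul OpWord.one StarWord.star u).substF f := rfl

theorem mulWordLeft_eq (g : kM k Z) (v : OpWord Z) :
    mulWordLeft v g = (StarWord.mul v StarWord.star OpWord.one).substF g := by
  rw [mulWordLeft, StarWord.substF]
  apply Finsupp.mapDomain_congr
  intro x _
  show v.mul x = v.mul (x.mul OpWord.one)
  rw [OpWord.mul_one']

theorem mulWordRight_apply (f : kM k Z) (u m : OpWord Z) :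
    (mulWordRight f u) (m.mul u) = f m :=
  Finsupp.mapDomain_apply (fun _ _ hab => OpWord.mul_right_cancel hab) f m

theorem mulWordLeft_apply (g : kM k Z) (v m : OpWord Z) :
    (mulWordLeft v g) (v.mul m) = g m :=
  Finsupp.mapDomain_apply (fun _ _ hab => OpWord.mul_left_cancel hab) g m

variable (hlt : IsMonomialOrder lt)
include hlt

theorem lt_mul_right {m m' : OpWord Z} (u : OpWord Z) (h : lt m m') :
    lt (m.mul u) (m'.mul u) :=
  hlt.compat (StarWord.mul OpWord.one StarWord.star u) m m' h

theorem lt_mul_left (v : OpWord Z) {m m' : OpWord Z} (h : lt m m') :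
    lt (v.mul m) (v.mul m') := by
  have := hlt.compat (StarWord.mul v StarWord.star OpWord.one) m m' h
  simpa [StarWord.subst, OpWord.mul_one'] using this

/-- Support bound for intersection compositions. -/
theorem inter_comp_supp {f g : kM k Z} {wf wg u v w : OpWord Z}
    (hlmf : IsLeadingMonomial lt f wf) (hlmg : IsLeadingMonomial lt g wg)
    (hfw : f wf = 1) (hgw : g wg = 1)
    (hw1 : w = wf.mul u) (hw2 : w = v.mul wg) :
    ∀ x ∈ (mulWordRight f u - mulWordLeft v g).support, lt x w := by
  intro x hx
  have hxne := Finsupp.mem_support_iff.1 hx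
  have hwcoef : (mulWordRight f u - mulWordLeft v g) w = 0 := by
    rw [Finsupp.sub_apply, hw1, mulWordRight_apply, ← hw1, hw2, mulWordLeft_apply,
      hfw, hgw, sub_self]
  have hxw : x ≠ w := fun hh => hxne (hh ▸ hwcoef)
  have hmem : x ∈ (mulWordRight f u).support ∨ x ∈ (mulWordLeft v g).support := by
    by_contra hcon
    push_neg at hcon
    apply hxne
    rw [Finsupp.sub_apply, Finsupp.notMem_support_iff.1 hcon.1,
      Finsupp.notMem_support_iff.1 hcon.2, sub_self]
  rcases hmem with hmem | hmem
  · obtain ⟨m, hmf, rfl⟩ : ∃ m ∈ f.support, x = m.mul u := by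
      classical
      have := Finsupp.mapDomain_support (f := fun m => m.mul u) (s := f) hmem
      simpa [eq_comm] using Finset.mem_image.1 this
    have hmwf : m ≠ wf := fun hh => hxw (by rw [hh, ← hw1])
    rw [hw1]
    exact lt_mul_right hlt u (hlmf.2 m hmf hmwf)
  · obtain ⟨m, hmg, rfl⟩ : ∃ m ∈ g.support, x = v.mul m := by
      classical
      have := Finsupp.mapDomain_support (f := fun m => v.mul m) (s := g) hmem
      simpa [eq_comm] using Finset.mem_image.1 this
    have hmwg : m ≠ wg := fun hh => hxw (by rw [hh, ← hw2])
    rw [hw2]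
    exact lt_mul_left hlt v (hlmg.2 m hmg hmwg)

/-- Support bound for including compositions. -/
theorem incl_comp_supp {f g : kM k Z} {wf wg : OpWord Z} {q : StarWord Z}
    (hlmf : IsLeadingMonomial lt f wf) (hlmg : IsLeadingMonomial lt g wg)
    (hfw : f wf = 1) (hgw : g wg = 1) (hq : wf = q.subst wg) :
    ∀ x ∈ (f - q.substF g).support, lt x wf := by
  intro x hx
  have hxne := Finsupp.mem_support_iff.1 hx
  have hwcoef : (f - q.substF g) wf = 0 := by
    rw [Finsupp.sub_apply, hfw, hq, StarWord.substF_apply_subst, hgw, sub_self]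
  have hxw : x ≠ wf := fun hh => hxne (hh ▸ hwcoef)
  have hmem : x ∈ f.support ∨ x ∈ (q.substF g).support := by
    by_contra hcon
    push_neg at hcon
    apply hxne
    rw [Finsupp.sub_apply, Finsupp.notMem_support_iff.1 hcon.1,
      Finsupp.notMem_support_iff.1 hcon.2, sub_self]
  rcases hmem with hmem | hmem
  · exact hlmf.2 x hmem hxw
  · obtain ⟨m, hmg, rfl⟩ := StarWord.support_substF q g x hmem
    have hmwg : m ≠ wg := fun hh => hxw (by rw [hh, ← hq])
    rw [hq]
    exact hlt.compat q m wg (hlmg.2 m hmg hmwg)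

variable (hm : Monicized lt S)
include hm

theorem coeff_lm_one {s : kM k Z} (hs : s ∈ S) {w : OpWord Z}
    (hw : IsLeadingMonomial lt s w) : s w = 1 := by
  obtain ⟨w', hw', hsw'⟩ := hm s hs
  rw [lm_unique hlt hw hw']; exact hsw'

/-- Direction (3) ⇒ (5): if the intersection is trivial then `S` is a GS basis. -/
theorem disjoint_imp_gs (hdis : OpIdeal S ⊓ spanSet k (IrrSet lt S) = ⊥) :
    IsGSBasis lt S := by
  have hcf : Confluent (PiS lt S) := disjoint_imp_confluent hlt hm hdis
  rw [IsGSBasis, monicVersion_eq hlt hm]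
  constructor
  · intro f hf g hg wf wg u v w hlmf hlmg hw1 hw2 _ _
    rw [trivialMod_iff_mem]
    have hmem : mulWordRight f u - mulWordLeft v g ∈ OpIdeal S := by
      refine Submodule.sub_mem _ ?_ ?_
      · rw [mulWordRight_eq]
        exact Submodule.subset_span ⟨f, hf, _, rfl⟩
      · rw [mulWordLeft_eq]
        exact Submodule.subset_span ⟨g, hg, _, rfl⟩
    exact rewrites_zero_mem_tspan hlt hm (mem_ideal_rewrites_zero hlt hm hcf hmem)
      (inter_comp_supp hlt hlmf hlmg (coeff_lm_one hlt hm hf hlmf)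
        (coeff_lm_one hlt hm hg hlmg) hw1 hw2)
  · intro f hf g hg wf wg q hlmf hlmg hq
    rw [trivialMod_iff_mem]
    have hmem : f - q.substF g ∈ OpIdeal S := by
      refine Submodule.sub_mem _ ?_ ?_
      · have : f = StarWord.star.substF f := by
          rw [StarWord.substF]
          exact (Finsupp.mapDomain_id).symm
        rw [this]
        exact Submodule.subset_span ⟨f, hf, _, rfl⟩
      · exact Submodule.subset_span ⟨g, hg, _, rfl⟩
    exact rewrites_zero_mem_tspan hlt hm (mem_ideal_rewrites_zero hlt hm hcf hmem)
      (incl_comp_supp hlt hlmf hlmg (coeff_lm_one hlt hm hf hlmf)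
        (coeff_lm_one hlt hm hg hlmg) hq)

end Aux6
section Aux7

variable {Z : Type}

namespace OpWord

theorem breadth_eq_zero {u : OpWord Z} : u.breadth = 0 ↔ u = one := by
  cases u <;> simp [breadth]

/-- Levi's lemma for bracketed words. -/
theorem levi {a b c d : OpWord Z} (h : a.mul b = c.mul d) :
    (∃ w, c = a.mul w ∧ b = w.mul d) ∨ (∃ w, a = c.mul w ∧ d = w.mul b) := by
  induction a generalizing c with
  | one =>
    exact Or.inl ⟨c, rfl, h⟩
  | var z a' ih =>
    cases c with
    | one => exact Or.inr ⟨var z a', rfl, h.symm⟩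
    | var z' c' =>
      obtain ⟨rfl, h2⟩ := OpWord.var.inj h
      rcases ih h2 with ⟨w, rfl, rfl⟩ | ⟨w, rfl, rfl⟩
      · exact Or.inl ⟨w, rfl, rfl⟩
      · exact Or.inr ⟨w, rfl, rfl⟩
    | brkCons b' c' => exact absurd h (by simp [mul])
  | brkCons e a' _ ih =>
    cases c with
    | one => exact Or.inr ⟨brkCons e a', rfl, h.symm⟩
    | var z' c' => exact absurd h (by simp [mul])
    | brkCons e' c' =>
      obtain ⟨rfl, h2⟩ := OpWord.brkCons.inj h
      rcases ih h2 with ⟨w, rfl, rfl⟩ | ⟨w, rfl, rfl⟩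
      · exact Or.inl ⟨w, rfl, rfl⟩
      · exact Or.inr ⟨w, rfl, rfl⟩

/-- The possible relative positions of two factors of the same word. -/
def ThreeFC (a₁ u₁ b₁ a₂ u₂ b₂ : OpWord Z) : Prop :=
  (∃ c d, a₂ = a₁.mul c ∧ u₁ = c.mul (u₂.mul d) ∧ b₂ = d.mul b₁) ∨
  (∃ c d, a₁ = a₂.mul c ∧ u₂ = c.mul (u₁.mul d) ∧ b₁ = d.mul b₂) ∨
  (∃ m, a₂ = a₁.mul (u₁.mul m) ∧ b₁ = m.mul (u₂.mul b₂)) ∨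
  (∃ m, a₁ = a₂.mul (u₂.mul m) ∧ b₂ = m.mul (u₁.mul b₁)) ∨
  (∃ c r d, c ≠ one ∧ r ≠ one ∧ d ≠ one ∧
    u₁ = c.mul r ∧ u₂ = r.mul d ∧ a₂ = a₁.mul c ∧ b₁ = d.mul b₂) ∨
  (∃ c r d, c ≠ one ∧ r ≠ one ∧ d ≠ one ∧
    u₂ = c.mul r ∧ u₁ = r.mul d ∧ a₁ = a₂.mul c ∧ b₂ = d.mul b₁)

theorem threeFC_swap {a₁ u₁ b₁ a₂ u₂ b₂ : OpWord Z}
    (h : ThreeFC a₁ u₁ b₁ a₂ u₂ b₂) : ThreeFC a₂ u₂ b₂ a₁ u₁ b₁ := by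
  rcases h with h | h | h | h | h | h
  · exact Or.inr (Or.inl h)
  · exact Or.inl h
  · exact Or.inr (Or.inr (Or.inr (Or.inl h)))
  · exact Or.inr (Or.inr (Or.inl h))
  · exact Or.inr (Or.inr (Or.inr (Or.inr (Or.inr h))))
  · exact Or.inr (Or.inr (Or.inr (Or.inr (Or.inl h))))

theorem three_factor_aux {a₁ u₁ b₁ a₂ u₂ b₂ w : OpWord Z}
    (ha₂ : a₂ = a₁.mul w) (hX : u₁.mul b₁ = w.mul (u₂.mul b₂)) :
    ThreeFC a₁ u₁ b₁ a₂ u₂ b₂ := by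
  rcases levi hX with ⟨w2, rfl, hb₁⟩ | ⟨w2, hu₁, hY⟩
  · -- w = u₁ w2 : u₁ entirely before u₂
    refine Or.inr (Or.inr (Or.inl ⟨w2, ?_, hb₁⟩))
    rw [ha₂]
  · -- u₁ = w w2, u₂ b₂ = w2 b₁
    rcases levi hY with ⟨w3, hw2, hb₂⟩ | ⟨w3, hu₂, hb₁⟩
    · -- w2 = u₂ w3 : u₂ inside u₁
      refine Or.inl ⟨w, w3, ha₂, ?_, hb₂⟩
      rw [hu₁, hw2]
    · -- u₂ = w2 w3, b₁ = w3 b₂ : potential overlap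
      by_cases hw1 : w = one
      · subst hw1
        have ha' : a₂ = a₁ := by rw [ha₂, mul_one']
        refine Or.inr (Or.inl ⟨one, w3, ?_, ?_, hb₁⟩)
        · rw [ha', mul_one']
        · rw [one_mul', hu₂, hu₁, one_mul']
      by_cases hw3 : w3 = one
      · subst hw3
        refine Or.inl ⟨w, one, ha₂, ?_, ?_⟩
        · rw [hu₁, hu₂, mul_one', mul_one']
        · rw [hb₁, one_mul', one_mul']
      by_cases hw2' : w2 = one
      · subst hw2'
        have hu₁' : u₁ = w := by rw [hu₁, mul_one']
        refine Or.inr (Or.inr (Or.inl ⟨one, ?_, ?_⟩))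
        · rw [mul_one', hu₁']; exact ha₂
        · rw [one_mul', hb₁, hu₂, one_mul']
      · exact Or.inr (Or.inr (Or.inr (Or.inr (Or.inl
          ⟨w, w2, w3, hw1, hw2', hw3, hu₁, hu₂, ha₂, hb₁⟩))))

theorem three_factor {a₁ u₁ b₁ a₂ u₂ b₂ : OpWord Z}
    (h : a₁.mul (u₁.mul b₁) = a₂.mul (u₂.mul b₂)) :
    ThreeFC a₁ u₁ b₁ a₂ u₂ b₂ := by
  rcases levi h with ⟨w, ha₂, hX⟩ | ⟨w, ha₁, hX⟩
  · exact three_factor_aux ha₂ hX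
  · exact threeFC_swap (three_factor_aux ha₁ hX)

end OpWord

namespace StarWord

/-- Extensional normal form of a star word. -/
theorem starword_nf (q : StarWord Z) :
    (∃ (a b : OpWord Z), ∀ x, q.subst x = a.mul (x.mul b)) ∨
    (∃ (a b : OpWord Z) (q' : StarWord Z), sizeOf q' < sizeOf q ∧
      ∀ x, q.subst x = a.mul ((OpWord.brk (q'.subst x)).mul b)) := by
  induction q with
  | star =>
    refine Or.inl ⟨OpWord.one, OpWord.one, fun x => ?_⟩
    rw [OpWord.one_mul', OpWord.mul_one']; rfl
  | brk q _ =>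
    refine Or.inr ⟨OpWord.one, OpWord.one, q, by simp, fun x => ?_⟩
    rw [OpWord.one_mul', OpWord.mul_one']; rfl
  | mul a q b ih =>
    rcases ih with ⟨a', b', hq⟩ | ⟨a', b', q', hs, hq⟩
    · refine Or.inl ⟨a.mul a', b'.mul b, fun x => ?_⟩
      show a.mul ((q.subst x).mul b) = _
      rw [hq x, OpWord.mul_assoc', OpWord.mul_assoc', OpWord.mul_assoc']
    · refine Or.inr ⟨a.mul a', b'.mul b, q', by simp; omega, fun x => ?_⟩
      show a.mul ((q.subst x).mul b) = _
      rw [hq x, OpWord.mul_assoc', OpWord.mul_assoc', OpWord.mul_assoc']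

end StarWord

end Aux7
section Aux8

variable {Z : Type}

namespace OpWord

theorem mul_eq_one {a b : OpWord Z} (h : a.mul b = one) : a = one ∧ b = one := by
  cases a with
  | one => exact ⟨rfl, h⟩
  | var z w => exact absurd h (by simp [mul])
  | brkCons e w => exact absurd h (by simp [mul])

theorem breadth_pos {u : OpWord Z} (h : u ≠ one) : 1 ≤ u.breadth := by
  rcases Nat.eq_zero_or_pos u.breadth with h0 | h1
  · exact absurd (breadth_eq_zero.1 h0) h
  · exact h1

theorem breadth_brk (v : OpWord Z) : (brk v).breadth = 1 := by
  simp [brk, breadth]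

end OpWord

namespace StarWord

/-- The five possible relative positions of two starred decompositions of a word. -/
def Classified (q₁ : StarWord Z) (u₁ : OpWord Z) (q₂ : StarWord Z) (u₂ : OpWord Z) : Prop :=
  (∃ p : StarWord Z, u₁ = p.subst u₂ ∧ ∀ x, q₂.subst x = q₁.subst (p.subst x)) ∨
  (∃ p : StarWord Z, u₂ = p.subst u₁ ∧ ∀ x, q₁.subst x = q₂.subst (p.subst x)) ∨
  (∃ g : OpWord Z → OpWord Z → OpWord Z,
    (∀ y, ∃ qy : StarWord Z, ∀ x, g x y = qy.subst x) ∧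
    (∀ x, ∃ qx : StarWord Z, ∀ y, g x y = qx.subst y) ∧
    (∀ x, q₁.subst x = g x u₂) ∧ (∀ y, q₂.subst y = g u₁ y)) ∨
  (∃ (Q : StarWord Z) (c r d : OpWord Z), c ≠ OpWord.one ∧ r ≠ OpWord.one ∧ d ≠ OpWord.one ∧
    u₁ = c.mul r ∧ u₂ = r.mul d ∧
    (∀ x, q₁.subst x = Q.subst (x.mul d)) ∧ (∀ y, q₂.subst y = Q.subst (c.mul y))) ∨
  (∃ (Q : StarWord Z) (c r d : OpWord Z), c ≠ OpWord.one ∧ r ≠ OpWord.one ∧ d ≠ OpWord.one ∧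
    u₂ = c.mul r ∧ u₁ = r.mul d ∧
    (∀ y, q₂.subst y = Q.subst (y.mul d)) ∧ (∀ x, q₁.subst x = Q.subst (c.mul x)))

theorem classified_swap {q₁ q₂ : StarWord Z} {u₁ u₂ : OpWord Z}
    (h : Classified q₁ u₁ q₂ u₂) : Classified q₂ u₂ q₁ u₁ := by
  rcases h with h | h | ⟨g, hy, hx, h1, h2⟩ | h | h
  · exact Or.inr (Or.inl h)
  · exact Or.inl h
  · exact Or.inr (Or.inr (Or.inl ⟨fun y x => g x y,
      fun y => hx y, fun x => hy x, h2, h1⟩))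
  · exact Or.inr (Or.inr (Or.inr (Or.inr h)))
  · exact Or.inr (Or.inr (Or.inr (Or.inl h)))

/-- Case where both star words are of product type. -/
theorem classify_starstar {q₁ q₂ : StarWord Z} {u₁ u₂ a₁ b₁ a₂ b₂ : OpWord Z}
    (hq₁ : ∀ x, q₁.subst x = a₁.mul (x.mul b₁))
    (hq₂ : ∀ x, q₂.subst x = a₂.mul (x.mul b₂))
    (h : q₁.subst u₁ = q₂.subst u₂) : Classified q₁ u₁ q₂ u₂ := by
  rw [hq₁, hq₂] at h
  rcases OpWord.three_factor h with
    ⟨c, d, ha, hu, hb⟩ | ⟨c, d, ha, hu, hb⟩ | ⟨m, ha, hb⟩ | ⟨m, ha, hb⟩ |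
    ⟨c, r, d, hc, hr, hd, hu1, hu2, ha, hb⟩ | ⟨c, r, d, hc, hr, hd, hu1, hu2, ha, hb⟩
  · refine Or.inl ⟨StarWord.mul c StarWord.star d, by simp [subst, hu], fun x => ?_⟩
    simp only [hq₁, hq₂, subst, ha, hb, OpWord.mul_assoc', OpWord.mul_one', OpWord.one_mul']
  · refine Or.inr (Or.inl ⟨StarWord.mul c StarWord.star d, by simp [subst, hu], fun x => ?_⟩)
    simp only [hq₁, hq₂, subst, ha, hb, OpWord.mul_assoc', OpWord.mul_one', OpWord.one_mul']
  · refine Or.inr (Or.inr (Or.inl ⟨fun x y => a₁.mul (x.mul (m.mul (y.mul b₂))),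
      fun y => ⟨StarWord.mul a₁ StarWord.star (m.mul (y.mul b₂)), fun x => ?_⟩,
      fun x => ⟨StarWord.mul (a₁.mul (x.mul m)) StarWord.star b₂, fun y => ?_⟩,
      fun x => ?_, fun y => ?_⟩)) <;>
    simp only [hq₁, hq₂, subst, ha, hb, OpWord.mul_assoc', OpWord.mul_one', OpWord.one_mul']
  · refine Or.inr (Or.inr (Or.inl ⟨fun x y => a₂.mul (y.mul (m.mul (x.mul b₁))),
      fun y => ⟨StarWord.mul (a₂.mul (y.mul m)) StarWord.star b₁, fun x => ?_⟩,
      fun x => ⟨StarWord.mul a₂ StarWord.star (m.mul (x.mul b₁)), fun y => ?_⟩,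
      fun x => ?_, fun y => ?_⟩)) <;>
    simp only [hq₁, hq₂, subst, ha, hb, OpWord.mul_assoc', OpWord.mul_one', OpWord.one_mul']
  · refine Or.inr (Or.inr (Or.inr (Or.inl ⟨StarWord.mul a₁ StarWord.star b₂, c, r, d,
      hc, hr, hd, hu1, hu2, fun x => ?_, fun y => ?_⟩))) <;>
    simp only [hq₁, hq₂, subst, ha, hb, OpWord.mul_assoc', OpWord.mul_one', OpWord.one_mul']
  · refine Or.inr (Or.inr (Or.inr (Or.inr ⟨StarWord.mul a₂ StarWord.star b₁, c, r, d,
      hc, hr, hd, hu1, hu2, fun y => ?_, fun x => ?_⟩))) <;>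
    simp only [hq₁, hq₂, subst, ha, hb, OpWord.mul_assoc', OpWord.mul_one', OpWord.one_mul']

end StarWord

end Aux8
section Aux9

variable {Z : Type}

namespace StarWord

/-- Case where `q₁` is of product type and `q₂` of bracket type. -/
theorem classify_starbrk {q₁ q₂ q₂' : StarWord Z} {u₁ u₂ a₁ b₁ a₂ b₂ : OpWord Z}
    (hq₁ : ∀ x, q₁.subst x = a₁.mul (x.mul b₁))
    (hq₂ : ∀ x, q₂.subst x = a₂.mul ((OpWord.brk (q₂'.subst x)).mul b₂))
    (h : q₁.subst u₁ = q₂.subst u₂) : Classified q₁ u₁ q₂ u₂ := by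
  rw [hq₁, hq₂] at h
  rcases OpWord.three_factor h with
    ⟨c, d, ha, hu, hb⟩ | ⟨c, d, ha, hu, hb⟩ | ⟨m, ha, hb⟩ | ⟨m, ha, hb⟩ |
    ⟨c, r, d, hc, hr, hd, hu1, hu2, ha, hb⟩ | ⟨c, r, d, hc, hr, hd, hu1, hu2, ha, hb⟩
  · -- the bracket letter is inside u₁
    refine Or.inl ⟨StarWord.mul c (StarWord.brk q₂') d, by simp [subst, hu], fun x => ?_⟩
    simp only [hq₁, hq₂, subst, ha, hb, OpWord.mul_assoc', OpWord.mul_one', OpWord.one_mul']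
  · -- u₁ is inside the bracket letter (as a factor of it)
    cases c with
    | one =>
      rw [OpWord.one_mul'] at hu
      cases u₁ with
      | one =>
        rw [OpWord.one_mul'] at hu
        have ha' : a₁ = a₂ := by rw [ha, OpWord.mul_one']
        refine Or.inr (Or.inr (Or.inl
          ⟨fun x y => a₂.mul (x.mul ((OpWord.brk (q₂'.subst y)).mul b₂)),
          fun y => ⟨StarWord.mul a₂ StarWord.star ((OpWord.brk (q₂'.subst y)).mul b₂),
            fun x => ?_⟩,
          fun x => ⟨StarWord.mul (a₂.mul x) (StarWord.brk q₂') b₂, fun y => ?_⟩,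
          fun x => ?_, fun y => ?_⟩)) <;>
        simp only [hq₁, hq₂, subst, ha', hb, ← hu, OpWord.mul_assoc', OpWord.mul_one',
          OpWord.one_mul']
      | var z u' => exact absurd hu (by simp [OpWord.mul, OpWord.brk])
      | brkCons e u' =>
        rw [show (OpWord.brkCons e u').mul d = OpWord.brkCons e (u'.mul d) from rfl,
          OpWord.brk] at hu
        obtain ⟨he, hud⟩ := OpWord.brkCons.inj hu
        obtain ⟨hu', hd⟩ := OpWord.mul_eq_one hud.symm
        subst he hu' hd
        have ha' : a₁ = a₂ := by rw [ha, OpWord.mul_one']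
        have hb' : b₁ = b₂ := by rw [hb, OpWord.one_mul']
        refine Or.inl ⟨StarWord.brk q₂', by simp [subst, OpWord.brk], fun x => ?_⟩
        simp only [hq₁, hq₂, subst, ha', hb', OpWord.brk, OpWord.mul_assoc',
          OpWord.mul_one', OpWord.one_mul']
    | var z c' => exact absurd hu (by simp [OpWord.mul, OpWord.brk])
    | brkCons e c' =>
      rw [show (OpWord.brkCons e c').mul (u₁.mul d) = OpWord.brkCons e (c'.mul (u₁.mul d))
        from rfl, OpWord.brk] at hu
      obtain ⟨he, hud⟩ := OpWord.brkCons.inj hu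
      obtain ⟨hc', hud2⟩ := OpWord.mul_eq_one hud.symm
      obtain ⟨hu1, hd⟩ := OpWord.mul_eq_one hud2
      subst he hc' hu1 hd
      refine Or.inr (Or.inr (Or.inl
        ⟨fun x y => a₂.mul ((OpWord.brk (q₂'.subst y)).mul (x.mul b₂)),
        fun y => ⟨StarWord.mul (a₂.mul (OpWord.brk (q₂'.subst y))) StarWord.star b₂,
          fun x => ?_⟩,
        fun x => ⟨StarWord.mul a₂ (StarWord.brk q₂') (x.mul b₂), fun y => ?_⟩,
        fun x => ?_, fun y => ?_⟩)) <;>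
      simp only [hq₁, hq₂, subst, ha, hb, OpWord.brk, OpWord.mul_assoc', OpWord.mul_one',
        OpWord.one_mul']
  · -- u₁ entirely before the bracket letter
    refine Or.inr (Or.inr (Or.inl
      ⟨fun x y => a₁.mul (x.mul (m.mul ((OpWord.brk (q₂'.subst y)).mul b₂))),
      fun y => ⟨StarWord.mul a₁ StarWord.star (m.mul ((OpWord.brk (q₂'.subst y)).mul b₂)),
        fun x => ?_⟩,
      fun x => ⟨StarWord.mul (a₁.mul (x.mul m)) (StarWord.brk q₂') b₂, fun y => ?_⟩,
      fun x => ?_, fun y => ?_⟩)) <;>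
    simp only [hq₁, hq₂, subst, ha, hb, OpWord.mul_assoc', OpWord.mul_one', OpWord.one_mul']
  · -- the bracket letter entirely before u₁
    refine Or.inr (Or.inr (Or.inl
      ⟨fun x y => a₂.mul ((OpWord.brk (q₂'.subst y)).mul (m.mul (x.mul b₁))),
      fun y => ⟨StarWord.mul (a₂.mul ((OpWord.brk (q₂'.subst y)).mul m)) StarWord.star b₁,
        fun x => ?_⟩,
      fun x => ⟨StarWord.mul a₂ (StarWord.brk q₂') (m.mul (x.mul b₁)), fun y => ?_⟩,
      fun x => ?_, fun y => ?_⟩)) <;>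
    simp only [hq₁, hq₂, subst, ha, hb, OpWord.mul_assoc', OpWord.mul_one', OpWord.one_mul']
  · -- overlap with a single bracket letter : impossible
    exfalso
    have := congrArg OpWord.breadth hu2
    rw [OpWord.breadth_brk, OpWord.breadth_mul] at this
    have h1 := OpWord.breadth_pos hr
    have h2 := OpWord.breadth_pos hd
    omega
  · exfalso
    have := congrArg OpWord.breadth hu1
    rw [OpWord.breadth_brk, OpWord.breadth_mul] at this
    have h1 := OpWord.breadth_pos hc
    have h2 := OpWord.breadth_pos hr
    omega

/-- Case where both star words are of bracket type. -/
theorem classify_brkbrk {q₁ q₂ q₁' q₂' : StarWord Z} {u₁ u₂ a₁ b₁ a₂ b₂ : OpWord Z}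
    (hq₁ : ∀ x, q₁.subst x = a₁.mul ((OpWord.brk (q₁'.subst x)).mul b₁))
    (hq₂ : ∀ x, q₂.subst x = a₂.mul ((OpWord.brk (q₂'.subst x)).mul b₂))
    (h : q₁.subst u₁ = q₂.subst u₂) :
    Classified q₁ u₁ q₂ u₂ ∨ (q₁'.subst u₁ = q₂'.subst u₂ ∧ a₂ = a₁ ∧ b₂ = b₁) := by
  rw [hq₁, hq₂] at h
  rcases OpWord.three_factor h with
    ⟨c, d, ha, hu, hb⟩ | ⟨c, d, ha, hu, hb⟩ | ⟨m, ha, hb⟩ | ⟨m, ha, hb⟩ |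
    ⟨c, r, d, hc, hr, hd, hu1, hu2, ha, hb⟩ | ⟨c, r, d, hc, hr, hd, hu1, hu2, ha, hb⟩
  · -- same position
    have hbr := congrArg OpWord.breadth hu
    rw [OpWord.breadth_brk, OpWord.breadth_mul, OpWord.breadth_mul,
      OpWord.breadth_brk] at hbr
    have hc1 : c = OpWord.one := OpWord.breadth_eq_zero.1 (by omega)
    have hd1 : d = OpWord.one := OpWord.breadth_eq_zero.1 (by omega)
    subst hc1 hd1
    rw [OpWord.one_mul', OpWord.mul_one'] at hu
    refine Or.inr ⟨OpWord.brkCons.inj (hu : _ = _) |>.1, ?_, ?_⟩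
    · rw [ha, OpWord.mul_one']
    · rw [hb, OpWord.one_mul']
  · have hbr := congrArg OpWord.breadth hu
    rw [OpWord.breadth_brk, OpWord.breadth_mul, OpWord.breadth_mul,
      OpWord.breadth_brk] at hbr
    have hc1 : c = OpWord.one := OpWord.breadth_eq_zero.1 (by omega)
    have hd1 : d = OpWord.one := OpWord.breadth_eq_zero.1 (by omega)
    subst hc1 hd1
    rw [OpWord.one_mul', OpWord.mul_one'] at hu
    refine Or.inr ⟨(OpWord.brkCons.inj (hu : _ = _) |>.1).symm, ?_, ?_⟩
    · rw [ha, OpWord.mul_one']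
    · rw [hb, OpWord.one_mul']
  · refine Or.inl (Or.inr (Or.inr (Or.inl
      ⟨fun x y => a₁.mul ((OpWord.brk (q₁'.subst x)).mul
        (m.mul ((OpWord.brk (q₂'.subst y)).mul b₂))),
      fun y => ⟨StarWord.mul a₁ (StarWord.brk q₁')
        (m.mul ((OpWord.brk (q₂'.subst y)).mul b₂)), fun x => ?_⟩,
      fun x => ⟨StarWord.mul (a₁.mul ((OpWord.brk (q₁'.subst x)).mul m))
        (StarWord.brk q₂') b₂, fun y => ?_⟩,
      fun x => ?_, fun y => ?_⟩))) <;>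
    simp only [hq₁, hq₂, subst, ha, hb, OpWord.mul_assoc', OpWord.mul_one', OpWord.one_mul']
  · refine Or.inl (Or.inr (Or.inr (Or.inl
      ⟨fun x y => a₂.mul ((OpWord.brk (q₂'.subst y)).mul
        (m.mul ((OpWord.brk (q₁'.subst x)).mul b₁))),
      fun y => ⟨StarWord.mul (a₂.mul ((OpWord.brk (q₂'.subst y)).mul m))
        (StarWord.brk q₁') b₁, fun x => ?_⟩,
      fun x => ⟨StarWord.mul a₂ (StarWord.brk q₂')
        (m.mul ((OpWord.brk (q₁'.subst x)).mul b₁)), fun y => ?_⟩,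
      fun x => ?_, fun y => ?_⟩))) <;>
    simp only [hq₁, hq₂, subst, ha, hb, OpWord.mul_assoc', OpWord.mul_one', OpWord.one_mul']
  · exfalso
    have := congrArg OpWord.breadth hu2
    rw [OpWord.breadth_brk, OpWord.breadth_mul] at this
    have h1 := OpWord.breadth_pos hr
    have h2 := OpWord.breadth_pos hd
    omega
  · exfalso
    have := congrArg OpWord.breadth hu2
    rw [OpWord.breadth_brk, OpWord.breadth_mul] at this
    have h1 := OpWord.breadth_pos hr
    have h2 := OpWord.breadth_pos hd
    omega

/-- Lifting a classification through an outer bracket frame. -/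
theorem classified_lift {q₁ q₂ q₁' q₂' : StarWord Z} {u₁ u₂ a b : OpWord Z}
    (hq₁ : ∀ x, q₁.subst x = a.mul ((OpWord.brk (q₁'.subst x)).mul b))
    (hq₂ : ∀ x, q₂.subst x = a.mul ((OpWord.brk (q₂'.subst x)).mul b))
    (hcl : Classified q₁' u₁ q₂' u₂) : Classified q₁ u₁ q₂ u₂ := by
  set Qout : StarWord Z := StarWord.mul a (StarWord.brk StarWord.star) b with hQ
  have hout1 : ∀ x, q₁.subst x = Qout.subst (q₁'.subst x) := fun x => hq₁ x
  have hout2 : ∀ x, q₂.subst x = Qout.subst (q₂'.subst x) := fun x => hq₂ x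
  rcases hcl with ⟨p, hu, hp⟩ | ⟨p, hu, hp⟩ | ⟨g, hy, hx, h1, h2⟩ |
    ⟨Q, c, r, d, hc, hr, hd, hu1, hu2, hA, hB⟩ | ⟨Q, c, r, d, hc, hr, hd, hu1, hu2, hA, hB⟩
  · refine Or.inl ⟨p, hu, fun x => ?_⟩
    rw [hout2, hp x, ← hout1]
  · refine Or.inr (Or.inl ⟨p, hu, fun x => ?_⟩)
    rw [hout1, hp x, ← hout2]
  · refine Or.inr (Or.inr (Or.inl ⟨fun x y => Qout.subst (g x y),
      fun y => ?_, fun x => ?_, fun x => by rw [hout1, h1 x], fun y => by rw [hout2, h2 y]⟩))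
    · obtain ⟨qy, hqy⟩ := hy y
      exact ⟨Qout.comp qy, fun x => by show Qout.subst (g x y) = _; rw [subst_comp, hqy x]⟩
    · obtain ⟨qx, hqx⟩ := hx x
      exact ⟨Qout.comp qx, fun y => by show Qout.subst (g x y) = _; rw [subst_comp, hqx y]⟩
  · refine Or.inr (Or.inr (Or.inr (Or.inl ⟨Qout.comp Q, c, r, d, hc, hr, hd, hu1, hu2,
      fun x => ?_, fun y => ?_⟩)))
    · rw [hout1, hA x, subst_comp]
    · rw [hout2, hB y, subst_comp]
  · refine Or.inr (Or.inr (Or.inr (Or.inr ⟨Qout.comp Q, c, r, d, hc, hr, hd, hu1, hu2,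
      fun y => ?_, fun x => ?_⟩)))
    · rw [hout2, hA y, subst_comp]
    · rw [hout1, hB x, subst_comp]

/-- The classification theorem for two starred decompositions of the same word. -/
theorem classify {q₁ q₂ : StarWord Z} {u₁ u₂ : OpWord Z}
    (h : q₁.subst u₁ = q₂.subst u₂) : Classified q₁ u₁ q₂ u₂ := by
  have main : ∀ (n : ℕ) (q₁ q₂ : StarWord Z) (u₁ u₂ : OpWord Z), sizeOf q₁ ≤ n →
      q₁.subst u₁ = q₂.subst u₂ → Classified q₁ u₁ q₂ u₂ := by
    intro n
    induction n using Nat.strong_induction_on with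
    | _ n ih =>
    intro q₁ q₂ u₁ u₂ hsz h
    rcases starword_nf q₁ with ⟨a₁, b₁, h₁⟩ | ⟨a₁, b₁, q₁', hs₁, h₁⟩ <;>
      rcases starword_nf q₂ with ⟨a₂, b₂, h₂⟩ | ⟨a₂, b₂, q₂', hs₂, h₂⟩
    · exact classify_starstar h₁ h₂ h
    · exact classify_starbrk h₁ h₂ h
    · exact classified_swap (classify_starbrk h₂ h₁ h.symm)
    · rcases classify_brkbrk h₁ h₂ h with hcl | ⟨hv, ha, hb⟩
      · exact hcl
      · have hrec : Classified q₁' u₁ q₂' u₂ :=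
          ih (sizeOf q₁') (lt_of_lt_of_le hs₁ hsz) q₁' q₂' u₁ u₂ le_rfl hv
        refine classified_lift h₁ (fun x => ?_) hrec
        rw [h₂ x, ha, hb]
  exact main (sizeOf q₁) q₁ q₂ u₁ u₂ le_rfl h

end StarWord

end Aux9
section Aux10

variable {k Z : Type} [Field k]
variable {lt : OpWord Z → OpWord Z → Prop} {S : Set (kM k Z)}

theorem mapDomain_eq_sum (f : OpWord Z → OpWord Z) (v : kM k Z) :
    Finsupp.mapDomain f v = ∑ a ∈ v.support, Finsupp.single (f a) (v a) := rfl

variable (hlt : IsMonomialOrder lt) (hm : Monicized lt S)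
include hlt hm

/-- Half of the disjoint case of the key lemma. -/
theorem key_disjoint_half {s₁ s₂ : kM k Z} (hs₁ : s₁ ∈ S) (hs₂ : s₂ ∈ S)
    {w₁ w₂ : OpWord Z} (hw₁ : IsLeadingMonomial lt s₁ w₁) (hw₂ : IsLeadingMonomial lt s₂ w₂)
    {q₁ q₂ : StarWord Z} {g : OpWord Z → OpWord Z → OpWord Z}
    (hy : ∀ y, ∃ qy : StarWord Z, ∀ x, g x y = qy.subst x)
    (h1 : ∀ x, q₁.subst x = g x w₂) (h2 : ∀ y, q₂.subst y = g w₁ y) :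
    q₁.substF s₁ -
      (∑ y ∈ s₂.support, s₂ y • Finsupp.mapDomain (fun x => g x y) s₁)
      ∈ Tspan lt S (q₁.subst w₁) := by
  classical
  have hs₂1 : s₂ w₂ = 1 := coeff_lm_one hlt hm hs₂ hw₂
  set M : OpWord Z → kM k Z := fun y => Finsupp.mapDomain (fun x => g x y) s₁ with hM
  have hq₁s : q₁.substF s₁ = M w₂ := by
    rw [StarWord.substF, hM]
    congr 1
    funext x
    exact h1 x
  have hsplit : (∑ y ∈ s₂.support, s₂ y • M y)
      = M w₂ + ∑ y ∈ s₂.support.erase w₂, s₂ y • M y := by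
    rw [← Finset.add_sum_erase _ _ hw₂.1, hs₂1, one_smul]
  rw [hq₁s, hsplit]
  have : M w₂ - (M w₂ + ∑ y ∈ s₂.support.erase w₂, s₂ y • M y)
      = -∑ y ∈ s₂.support.erase w₂, s₂ y • M y := by abel
  rw [this]
  refine Submodule.neg_mem _ (Submodule.sum_mem _ ?_)
  intro y hy'
  obtain ⟨hyne, hymem⟩ := Finset.mem_erase.1 hy'
  obtain ⟨qy, hqy⟩ := hy y
  have hMy : M y = qy.substF s₁ := by
    show Finsupp.mapDomain (fun x => g x y) s₁ = _
    rw [StarWord.substF]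
    congr 1
    funext x
    exact hqy x
  refine Submodule.smul_mem _ _ (Submodule.subset_span ?_)
  refine ⟨s₁, hs₁, w₁, hw₁, qy, ?_, hMy⟩
  · have hq : qy.subst w₁ = q₂.subst y := by rw [← hqy w₁, h2]
    have hlty : lt (q₂.subst y) (q₂.subst w₂) :=
      hlt.compat q₂ y w₂ (hw₂.2 y hymem hyne)
    rw [hq, h1, ← h2]
    exact hlty

omit hlt hm in
/-- Fubini for the double sums appearing in the disjoint case. -/
theorem key_disjoint_fubini {s₁ s₂ : kM k Z} {g : OpWord Z → OpWord Z → OpWord Z} :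
    (∑ y ∈ s₂.support, s₂ y • Finsupp.mapDomain (fun x => g x y) s₁)
      = ∑ x ∈ s₁.support, s₁ x • Finsupp.mapDomain (fun y => g x y) s₂ := by
  classical
  have lhs : (∑ y ∈ s₂.support, s₂ y • Finsupp.mapDomain (fun x => g x y) s₁)
      = ∑ y ∈ s₂.support, ∑ x ∈ s₁.support, Finsupp.single (g x y) (s₂ y * s₁ x) := by
    refine Finset.sum_congr rfl fun y _ => ?_
    rw [mapDomain_eq_sum, Finset.smul_sum]
    refine Finset.sum_congr rfl fun x _ => ?_
    rw [Finsupp.smul_single, smul_eq_mul]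
  have rhs : (∑ x ∈ s₁.support, s₁ x • Finsupp.mapDomain (fun y => g x y) s₂)
      = ∑ x ∈ s₁.support, ∑ y ∈ s₂.support, Finsupp.single (g x y) (s₁ x * s₂ y) := by
    refine Finset.sum_congr rfl fun x _ => ?_
    rw [mapDomain_eq_sum, Finset.smul_sum]
    refine Finset.sum_congr rfl fun y _ => ?_
    rw [Finsupp.smul_single, smul_eq_mul]
  rw [lhs, rhs, Finset.sum_comm]
  refine Finset.sum_congr rfl fun y _ => Finset.sum_congr rfl fun x _ => ?_
  rw [mul_comm]

/-- The key lemma: two rewrites of the same leading word differ by something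
trivial, provided `S` is a Gröbner–Shirshov basis. -/
theorem key_diff
    (hgs1 : ∀ f ∈ S, ∀ g ∈ S,
      ∀ (wf wg u v w : OpWord Z),
        IsLeadingMonomial lt f wf → IsLeadingMonomial lt g wg →
        w = wf.mul u → w = v.mul wg →
        max wf.breadth wg.breadth < w.breadth →
        w.breadth < wf.breadth + wg.breadth →
        TrivialMod lt S w (mulWordRight f u - mulWordLeft v g))
    (hgs2 : ∀ f ∈ S, ∀ g ∈ S,
      ∀ (wf wg : OpWord Z) (q : StarWord Z),
        IsLeadingMonomial lt f wf → IsLeadingMonomial lt g wg →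
        wf = q.subst wg →
        TrivialMod lt S wf (f - q.substF g))
    {s₁ s₂ : kM k Z} (hs₁ : s₁ ∈ S) (hs₂ : s₂ ∈ S)
    {w₁ w₂ : OpWord Z} (hw₁ : IsLeadingMonomial lt s₁ w₁) (hw₂ : IsLeadingMonomial lt s₂ w₂)
    {q₁ q₂ : StarWord Z} (heq : q₁.subst w₁ = q₂.subst w₂) :
    q₁.substF s₁ - q₂.substF s₂ ∈ Tspan lt S (q₁.subst w₁) := by
  classical
  rcases StarWord.classify heq with ⟨p, hu, hp⟩ | ⟨p, hu, hp⟩ | ⟨g, hy, hx, h1, h2⟩ |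
    ⟨Q, c, r, d, hc, hr, hd, hu1, hu2, hA, hB⟩ | ⟨Q, c, r, d, hc, hr, hd, hu1, hu2, hA, hB⟩
  · -- w₂ occurrence inside w₁ : including composition
    have htriv : TrivialMod lt S w₁ (s₁ - p.substF s₂) :=
      hgs2 s₁ hs₁ s₂ hs₂ w₁ w₂ p hw₁ hw₂ hu
    have hdiff : q₁.substF s₁ - q₂.substF s₂ = q₁.substF (s₁ - p.substF s₂) := by
      rw [StarWord.substF_sub, ← StarWord.substF_comp]
      congr 1
      apply StarWord.substF_congr
      intro x
      rw [StarWord.subst_comp]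
      exact hp x
    rw [hdiff]
    exact tspan_push hlt q₁ (trivialMod_iff_mem.1 htriv)
  · -- w₁ occurrence inside w₂ : including composition the other way
    have htriv : TrivialMod lt S w₂ (s₂ - p.substF s₁) :=
      hgs2 s₂ hs₂ s₁ hs₁ w₂ w₁ p hw₂ hw₁ hu
    have hdiff : q₂.substF s₂ - q₁.substF s₁ = q₂.substF (s₂ - p.substF s₁) := by
      rw [StarWord.substF_sub, ← StarWord.substF_comp]
      congr 1
      apply StarWord.substF_congr
      intro x
      rw [StarWord.subst_comp]
      exact hp x
    have : q₁.substF s₁ - q₂.substF s₂ = -(q₂.substF s₂ - q₁.substF s₁) := by abel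
    rw [this, hdiff]
    refine Submodule.neg_mem _ ?_
    have := tspan_push hlt q₂ (trivialMod_iff_mem.1 htriv)
    rwa [heq]
  · -- disjoint occurrences
    have hE1 := key_disjoint_half hlt hm hs₁ hs₂ hw₁ hw₂ hy h1 h2
    have hE2 := key_disjoint_half hlt hm hs₂ hs₁ hw₂ hw₁
      (g := fun y x => g x y) (q₁ := q₂) (q₂ := q₁) hx h2 h1
    rw [key_disjoint_fubini] at hE1
    have hE2' : q₂.substF s₂ -
        (∑ x ∈ s₁.support, s₁ x • Finsupp.mapDomain (fun y => g x y) s₂)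
        ∈ Tspan lt S (q₁.subst w₁) := by
      rw [heq]
      simpa using hE2
    have hsplit : q₁.substF s₁ - q₂.substF s₂ =
        (q₁.substF s₁ - ∑ x ∈ s₁.support, s₁ x • Finsupp.mapDomain (fun y => g x y) s₂)
        - (q₂.substF s₂ - ∑ x ∈ s₁.support, s₁ x • Finsupp.mapDomain (fun y => g x y) s₂) := by
      abel
    rw [hsplit]
    exact Submodule.sub_mem _ hE1 hE2'
  · -- overlap, w₁ on the left
    have e1 : w₁.breadth = c.breadth + r.breadth := by rw [hu1, OpWord.breadth_mul]
    have e2 : w₂.breadth = r.breadth + d.breadth := by rw [hu2, OpWord.breadth_mul]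
    have hb1 := OpWord.breadth_pos hc
    have hb2 := OpWord.breadth_pos hr
    have hb3 := OpWord.breadth_pos hd
    have hW : w₁.mul d = c.mul w₂ := by rw [hu1, hu2, OpWord.mul_assoc']
    have hmax : max w₁.breadth w₂.breadth < (w₁.mul d).breadth := by
      rw [OpWord.breadth_mul]
      exact Nat.max_lt.mpr ⟨by omega, by omega⟩
    have hsum : (w₁.mul d).breadth < w₁.breadth + w₂.breadth := by
      rw [OpWord.breadth_mul]; omega
    have htriv := hgs1 s₁ hs₁ s₂ hs₂ w₁ w₂ d c (w₁.mul d) hw₁ hw₂ rfl hW hmax hsum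
    have hdiff : q₁.substF s₁ - q₂.substF s₂
        = Q.substF (mulWordRight s₁ d - mulWordLeft c s₂) := by
      rw [StarWord.substF_sub]
      congr 1
      · rw [mulWordRight, StarWord.substF, StarWord.substF, ← Finsupp.mapDomain_comp]
        congr 1
        funext x
        exact hA x
      · rw [mulWordLeft, StarWord.substF, StarWord.substF, ← Finsupp.mapDomain_comp]
        congr 1
        funext x
        exact hB x
    rw [hdiff]
    have := tspan_push hlt Q (trivialMod_iff_mem.1 htriv)
    rwa [← hA w₁] at this
  · -- overlap, w₂ on the left
    have e1 : w₂.breadth = c.breadth + r.breadth := by rw [hu1, OpWord.breadth_mul]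
    have e2 : w₁.breadth = r.breadth + d.breadth := by rw [hu2, OpWord.breadth_mul]
    have hb1 := OpWord.breadth_pos hc
    have hb2 := OpWord.breadth_pos hr
    have hb3 := OpWord.breadth_pos hd
    have hW : w₂.mul d = c.mul w₁ := by rw [hu1, hu2, OpWord.mul_assoc']
    have hmax : max w₂.breadth w₁.breadth < (w₂.mul d).breadth := by
      rw [OpWord.breadth_mul]
      exact Nat.max_lt.mpr ⟨by omega, by omega⟩
    have hsum : (w₂.mul d).breadth < w₂.breadth + w₁.breadth := by
      rw [OpWord.breadth_mul]; omega
    have htriv := hgs1 s₂ hs₂ s₁ hs₁ w₂ w₁ d c (w₂.mul d) hw₂ hw₁ rfl hW hmax hsum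
    have hdiff : q₂.substF s₂ - q₁.substF s₁
        = Q.substF (mulWordRight s₂ d - mulWordLeft c s₁) := by
      rw [StarWord.substF_sub]
      congr 1
      · rw [mulWordRight, StarWord.substF, StarWord.substF, ← Finsupp.mapDomain_comp]
        congr 1
        funext x
        exact hA x
      · rw [mulWordLeft, StarWord.substF, StarWord.substF, ← Finsupp.mapDomain_comp]
        congr 1
        funext x
        exact hB x
    have hneg : q₁.substF s₁ - q₂.substF s₂ = -(q₂.substF s₂ - q₁.substF s₁) := by abel
    rw [hneg, hdiff]
    refine Submodule.neg_mem _ ?_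
    have := tspan_push hlt Q (trivialMod_iff_mem.1 htriv)
    rw [← hA w₂] at this
    rwa [heq]

end Aux10
section Aux11

open scoped Classical

variable {k Z : Type} [Field k]
variable (lt : OpWord Z → OpWord Z → Prop)

/-- A canonical leading monomial. -/
noncomputable def lmw (s : kM k Z) : OpWord Z :=
  if h : ∃ w, IsLeadingMonomial lt s w then h.choose else OpWord.one

/-- The leading word of a term `c • q|s`. -/
noncomputable def tope (e : k × StarWord Z × kM k Z) : OpWord Z :=
  e.2.1.subst (lmw lt e.2.2)

/-- The value of a list of terms. -/
noncomputable def lval (L : List (k × StarWord Z × kM k Z)) : kM k Z :=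
  (L.map (fun e => e.1 • e.2.1.substF e.2.2)).sum

variable {lt}

theorem lval_nil : lval ([] : List (k × StarWord Z × kM k Z)) = 0 := rfl

theorem lval_cons (e : k × StarWord Z × kM k Z) (L : List (k × StarWord Z × kM k Z)) :
    lval (e :: L) = e.1 • e.2.1.substF e.2.2 + lval L := by
  rw [lval, List.map_cons, List.sum_cons]; rfl

theorem lval_append (A B : List (k × StarWord Z × kM k Z)) :
    lval (A ++ B) = lval A + lval B := by
  rw [lval, List.map_append, List.sum_append]; rfl

theorem lval_perm {A B : List (k × StarWord Z × kM k Z)} (h : A.Perm B) :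
    lval A = lval B :=
  (h.map _).sum_eq

theorem lval_scale (c : k) (K : List (k × StarWord Z × kM k Z)) :
    lval (K.map (fun e => (c * e.1, e.2))) = c • lval K := by
  induction K with
  | nil => simp [lval]
  | cons e K ih =>
    rw [List.map_cons, lval_cons, lval_cons, smul_add, ← ih, mul_smul]

theorem lval_filter_nz (K : List (k × StarWord Z × kM k Z)) :
    lval (K.filter (fun e => e.1 ≠ 0)) = lval K := by
  induction K with
  | nil => rfl
  | cons e K ih =>
    by_cases he : e.1 = 0
    · rw [List.filter_cons_of_neg (by simp [he]), ih, lval_cons, he, zero_smul, zero_add]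
    · rw [List.filter_cons_of_pos (by simp [he]), lval_cons, lval_cons, ih]

variable {S : Set (kM k Z)}
variable (hlt : IsMonomialOrder lt) (hm : Monicized lt S)
include hlt hm

theorem lmw_spec {s : kM k Z} (hs : s ∈ S) :
    IsLeadingMonomial lt s (lmw lt s) ∧ s (lmw lt s) = 1 := by
  obtain ⟨w, hw, hsw⟩ := hm s hs
  have hex : ∃ w, IsLeadingMonomial lt s w := ⟨w, hw⟩
  have : lmw lt s = hex.choose := by rw [lmw, dif_pos hex]
  have hch := hex.choose_spec
  rw [this]
  have : hex.choose = w := lm_unique hlt hch hw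
  rw [this]
  exact ⟨hw, hsw⟩

/-- Support of a term value is dominated by the leading words. -/
theorem lval_supp {L : List (k × StarWord Z × kM k Z)} (hS : ∀ e ∈ L, e.2.2 ∈ S) :
    ∀ x ∈ (lval L).support, ∃ e ∈ L, x = tope lt e ∨ lt x (tope lt e) := by
  induction L with
  | nil => simp [lval]
  | cons e L ih =>
    intro x hx
    rw [lval_cons] at hx
    have := Finsupp.support_add hx
    rcases Finset.mem_union.1 this with hx1 | hx2
    · have hx1' : x ∈ (e.2.1.substF e.2.2).support := by
        have := Finsupp.support_smul (b := e.1) (g := e.2.1.substF e.2.2)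
        exact this hx1
      obtain ⟨y, hy, rfl⟩ := StarWord.support_substF _ _ x hx1'
      have hlm := (lmw_spec hlt hm (hS e (by simp))).1
      refine ⟨e, by simp, ?_⟩
      rcases eq_or_ne y (lmw lt e.2.2) with rfl | hne
      · exact Or.inl rfl
      · exact Or.inr (hlt.compat _ _ _ (hlm.2 y hy hne))
    · obtain ⟨e', he', h'⟩ := ih (fun e' he' => hS e' (by simp [he'])) x hx2
      exact ⟨e', by simp [he'], h'⟩

/-- If all leading words are below `w` then the coefficient at `w` vanishes. -/
theorem lval_coef_zero {L : List (k × StarWord Z × kM k Z)} (hS : ∀ e ∈ L, e.2.2 ∈ S)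
    {w : OpWord Z} (hb : ∀ e ∈ L, lt (tope lt e) w) :
    (lval L) w = 0 := by
  by_contra h0
  obtain ⟨e, he, hor⟩ := lval_supp hlt hm hS w (Finsupp.mem_support_iff.2 h0)
  rcases hor with rfl | hlt'
  · exact lt_irrefl'' hlt _ (hb e he)
  · exact lt_irrefl'' hlt w (lt_trans'' hlt hlt' (hb e he))

end Aux11
section Aux12

open scoped Classical

variable {k Z : Type} [Field k]
variable {lt : OpWord Z → OpWord Z → Prop} {S : Set (kM k Z)}
variable (hlt : IsMonomialOrder lt) (hm : Monicized lt S)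
include hlt hm

/-- The composition-diamond induction: if `S` is a GS basis then the leading
monomial of any nonzero represented element is reducible. -/
theorem main_cd
    (hgs1 : ∀ f ∈ S, ∀ g ∈ S,
      ∀ (wf wg u v w : OpWord Z),
        IsLeadingMonomial lt f wf → IsLeadingMonomial lt g wg →
        w = wf.mul u → w = v.mul wg →
        max wf.breadth wg.breadth < w.breadth →
        w.breadth < wf.breadth + wg.breadth →
        TrivialMod lt S w (mulWordRight f u - mulWordLeft v g))
    (hgs2 : ∀ f ∈ S, ∀ g ∈ S,
      ∀ (wf wg : OpWord Z) (q : StarWord Z),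
        IsLeadingMonomial lt f wf → IsLeadingMonomial lt g wg →
        wf = q.subst wg →
        TrivialMod lt S wf (f - q.substF g)) :
    ∀ w : OpWord Z, ∀ m : ℕ, ∀ L : List (k × StarWord Z × kM k Z),
      (∀ e ∈ L, e.2.2 ∈ S ∧ e.1 ≠ 0) →
      (∀ e ∈ L, tope lt e = w ∨ lt (tope lt e) w) →
      (L.filter (fun e => decide (tope lt e = w))).length ≤ m →
      ∀ t, IsLeadingMonomial lt (lval L) t → Red lt S t := by
  intro w
  induction w using WellFounded.induction hlt.wellOrder.wf with
  | _ w ihw =>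
  intro m
  induction m using Nat.strong_induction_on with
  | _ m ihm =>
  intro L hgood hbound hcount t hlm
  have goodS : ∀ e ∈ L, e.2.2 ∈ S := fun e he => (hgood e he).1
  set Pb : (k × StarWord Z × kM k Z) → Bool := fun e => decide (tope lt e = w) with hPb
  set R := L.filter (fun e => !Pb e) with hRdef
  have hmemR : ∀ e ∈ R, lt (tope lt e) w := by
    intro e he
    have h1 := List.of_mem_filter (show e ∈ L.filter (fun e => !Pb e) from he)
    have h2 : ¬ (tope lt e = w) := by
      simpa [hPb] using h1
    rcases hbound e (List.mem_of_mem_filter he) with h' | h'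
    · exact absurd h' h2
    · exact h'
  have hsubR : ∀ e ∈ R, e ∈ L := fun e he => List.mem_of_mem_filter he
  have hvalsplit : lval L = lval (L.filter Pb) + lval R := by
    rw [← lval_append]
    exact (lval_perm (List.filter_append_perm Pb L)).symm
  rcases hFl : L.filter Pb with _ | ⟨e₁, F1⟩
  · -- no term with leading word w
    have hallR : ∀ e ∈ L, lt (tope lt e) w := by
      intro e he
      rcases hbound e he with h' | h'
      · exfalso
        have : e ∈ L.filter Pb := List.mem_filter.2 ⟨he, by simp [hPb, h']⟩
        rw [hFl] at this
        simp at this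
      · exact h'
    rcases L with _ | ⟨e0, L0⟩
    · exfalso
      have := hlm.1
      simp [lval] at this
    · set A := ((e0 :: L0).map (tope lt)).toFinset with hA
      have hAne : A.Nonempty := by simp [hA]
      obtain ⟨w', hw'A, hmax⟩ := exists_max_finset hlt A hAne
      have hw'mem : w' ∈ (e0 :: L0).map (tope lt) := by
        rw [hA] at hw'A
        exact List.mem_toFinset.1 hw'A
      obtain ⟨e', he'mem, he'top⟩ := List.mem_map.1 hw'mem
      have hw'lt : lt w' w := he'top ▸ hallR e' he'mem
      refine ihw w' hw'lt (((e0 :: L0).filter (fun e => decide (tope lt e = w'))).length)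
        (e0 :: L0) hgood ?_ le_rfl t hlm
      intro e he
      have : tope lt e ∈ A := by
        rw [hA]
        exact List.mem_toFinset.2 (List.mem_map.2 ⟨e, he, rfl⟩)
      rcases eq_or_ne (tope lt e) w' with h' | h'
      · exact Or.inl h'
      · exact Or.inr (hmax _ this h')
  · have he₁L : e₁ ∈ L := List.mem_of_mem_filter (by rw [hFl]; simp)
    have he₁top : tope lt e₁ = w := by
      have : Pb e₁ = true := List.of_mem_filter (l := L) (by rw [hFl]; simp)
      simpa [hPb] using this
    obtain ⟨hs₁S, hc₁⟩ := hgood e₁ he₁L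
    rcases F1 with _ | ⟨e₂, F2⟩
    · -- exactly one term with leading word w
      have hcoefR : (lval R) w = 0 :=
        lval_coef_zero hlt hm (fun e he => goodS e (hsubR e he)) hmemR
      have hcoef1 : (e₁.2.1.substF e₁.2.2) w = 1 := by
        rw [← he₁top, tope, StarWord.substF_apply_subst, (lmw_spec hlt hm hs₁S).2]
      have hw0 : (lval L) w = e₁.1 := by
        rw [hvalsplit, hFl]
        rw [lval_cons, lval_nil, add_zero]
        rw [Finsupp.add_apply, Finsupp.smul_apply, hcoef1, hcoefR, smul_eq_mul,
          mul_one, add_zero]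
      have hwsupp : w ∈ (lval L).support := Finsupp.mem_support_iff.2 (hw0 ▸ hc₁)
      have ht : t = w := by
        by_contra hne
        have h1 : lt w t := hlm.2 w hwsupp (Ne.symm hne)
        obtain ⟨e, heL, hor⟩ := lval_supp hlt hm goodS t hlm.1
        have h2 : lt t w := by
          rcases hor with h' | h'
          · rcases hbound e heL with h'' | h''
            · exact absurd (h' ▸ h'') hne
            · exact h' ▸ h''
          · rcases hbound e heL with h'' | h''
            · exact h'' ▸ h'
            · exact lt_trans'' hlt h' h''
        exact lt_asymm'' hlt h1 h2
      rw [ht]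
      exact ⟨e₁.2.2, hs₁S, lmw lt e₁.2.2, (lmw_spec hlt hm hs₁S).1, e₁.2.1, he₁top.symm⟩
    · -- at least two terms with leading word w : combine them
      have he₂L : e₂ ∈ L := List.mem_of_mem_filter (by rw [hFl]; simp)
      have he₂top : tope lt e₂ = w := by
        have : Pb e₂ = true := List.of_mem_filter (l := L) (by rw [hFl]; simp)
        simpa [hPb] using this
      obtain ⟨hs₂S, hc₂⟩ := hgood e₂ he₂L
      have heq : e₁.2.1.subst (lmw lt e₁.2.2) = e₂.2.1.subst (lmw lt e₂.2.2) := by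
        show tope lt e₁ = tope lt e₂
        rw [he₁top, he₂top]
      have hd : e₁.2.1.substF e₁.2.2 - e₂.2.1.substF e₂.2.2 ∈ Tspan lt S w := by
        have := key_diff hlt hm hgs1 hgs2 hs₁S hs₂S (lmw_spec hlt hm hs₁S).1
          (lmw_spec hlt hm hs₂S).1 heq
        rwa [show e₁.2.1.subst (lmw lt e₁.2.2) = w from he₁top] at this
      obtain ⟨n, cK, gK, hsum⟩ := Submodule.mem_span_set'.1 hd
      have hgK : ∀ i : Fin n, ∃ s ∈ S, ∃ ws, IsLeadingMonomial lt s ws ∧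
          ∃ q : StarWord Z, lt (q.subst ws) w ∧ (gK i : kM k Z) = q.substF s :=
        fun i => (gK i).2
      choose sK hsKS wsK hwsK qK hqK hxK using hgK
      set K : List (k × StarWord Z × kM k Z) :=
        List.ofFn (fun i => (cK i, qK i, sK i)) with hKdef
      have hvalK : lval K =
          e₁.2.1.substF e₁.2.2 - e₂.2.1.substF e₂.2.2 := by
        rw [hKdef, lval, List.map_ofFn, List.sum_ofFn, ← hsum]
        refine Finset.sum_congr rfl fun i _ => ?_
        show cK i • (qK i).substF (sK i) = cK i • (gK i : kM k Z)
        rw [hxK i]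
      have hKmem : ∀ e ∈ K, e.2.2 ∈ S ∧ lt (tope lt e) w := by
        intro e he
        rw [hKdef] at he
        obtain ⟨i, rfl⟩ := List.mem_ofFn.1 he
        refine ⟨hsKS i, ?_⟩
        show lt ((qK i).subst (lmw lt (sK i))) w
        rw [lm_unique hlt (lmw_spec hlt hm (hsKS i)).1 (hwsK i)]
        exact hqK i
      set K2 : List (k × StarWord Z × kM k Z) :=
        (K.map (fun e => (-e₂.1 * e.1, e.2))).filter (fun e => e.1 ≠ 0) with hK2def
      have hK2mem : ∀ e ∈ K2, (e.2.2 ∈ S ∧ e.1 ≠ 0) ∧ lt (tope lt e) w := by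
        intro e he
        rw [hK2def] at he
        have he' := List.mem_of_mem_filter he
        have hne : e.1 ≠ 0 := by
          have := List.of_mem_filter he
          simpa using this
        obtain ⟨e', he'K, rfl⟩ := List.mem_map.1 he'
        obtain ⟨hS', hlt'⟩ := hKmem e' he'K
        exact ⟨⟨hS', hne⟩, hlt'⟩
      have hvalK2 : lval K2 = (-e₂.1) • lval K := by
        rw [hK2def, lval_filter_nz, lval_scale]
      set hd1 : k := e₁.1 + e₂.1 with hhd1
      set L2 : List (k × StarWord Z × kM k Z) :=
        (if hd1 = 0 then [] else [(hd1, e₁.2)]) ++ K2 ++ F2 ++ R with hL2def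
      have hhead : lval (if hd1 = 0 then ([] : List (k × StarWord Z × kM k Z))
          else [(hd1, e₁.2)]) = hd1 • e₁.2.1.substF e₁.2.2 := by
        split_ifs with h
        · rw [h, zero_smul, lval_nil]
        · rw [lval_cons, lval_nil, add_zero]
      have hmemF2 : ∀ e ∈ F2, e ∈ L ∧ tope lt e = w := by
        intro e he
        have heF : e ∈ L.filter Pb := by rw [hFl]; simp [he]
        refine ⟨List.mem_of_mem_filter heF, ?_⟩
        have : Pb e = true := List.of_mem_filter heF
        simpa [hPb] using this
      have hvalL2 : lval L2 = lval L := by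
        rw [hL2def, lval_append, lval_append, lval_append, hhead, hvalK2, hvalK]
        rw [hvalsplit, hFl, lval_cons, lval_cons]
        rw [hhd1]
        module
      have hgood2 : ∀ e ∈ L2, e.2.2 ∈ S ∧ e.1 ≠ 0 := by
        intro e he
        rw [hL2def] at he
        simp only [List.mem_append] at he
        rcases he with ((he | he) | he) | he
        · split_ifs at he with h
          · simp at he
          · simp only [List.mem_singleton] at he
            subst he
            exact ⟨hs₁S, h⟩
        · exact (hK2mem e he).1
        · exact hgood e (hmemF2 e he).1
        · exact hgood e (hsubR e he)
      have hbound2 : ∀ e ∈ L2, tope lt e = w ∨ lt (tope lt e) w := by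
        intro e he
        rw [hL2def] at he
        simp only [List.mem_append] at he
        rcases he with ((he | he) | he) | he
        · split_ifs at he with h
          · simp at he
          · simp only [List.mem_singleton] at he
            subst he
            exact Or.inl he₁top
        · exact Or.inr (hK2mem e he).2
        · exact Or.inl (hmemF2 e he).2
        · exact Or.inr (hmemR e he)
      have hcount2 : (L2.filter Pb).length ≤ 1 + F2.length := by
        rw [hL2def, List.filter_append, List.filter_append, List.filter_append]
        rw [List.length_append, List.length_append, List.length_append]
        have h1 : ((if hd1 = 0 then ([] : List (k × StarWord Z × kM k Z))
            else [(hd1, e₁.2)]).filter Pb).length ≤ 1 := by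
          split_ifs
          · simp
          · simpa using List.length_filter_le Pb [(hd1, e₁.2)]
        have h2 : (K2.filter Pb).length = 0 := by
          rw [List.length_eq_zero_iff, List.filter_eq_nil_iff]
          intro e he
          have := (hK2mem e he).2
          simp only [hPb, decide_eq_true_eq]
          intro h'
          exact lt_irrefl'' hlt w (h' ▸ this)
        have h3 : (F2.filter Pb).length ≤ F2.length := List.length_filter_le _ _
        have h4 : (R.filter Pb).length = 0 := by
          rw [List.length_eq_zero_iff, List.filter_eq_nil_iff]
          intro e he
          have h1' := List.of_mem_filter (show e ∈ L.filter (fun e => !Pb e) from he)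
          simp only [Bool.not_eq_true'] at h1'
          simp [h1']
        omega
      have hmlt : 1 + F2.length < m := by
        have : (L.filter Pb).length ≤ m := hcount
        rw [hFl] at this
        simp only [List.length_cons] at this
        omega
      exact ihm (1 + F2.length) hmlt L2 hgood2 hbound2 hcount2 t (hvalL2 ▸ hlm)

end Aux12
section Aux13

open scoped Classical

variable {k Z : Type} [Field k]
variable {lt : OpWord Z → OpWord Z → Prop} {S : Set (kM k Z)}
variable (hlt : IsMonomialOrder lt) (hm : Monicized lt S)
include hlt hm

/-- Direction (5) ⇒ (3). -/
theorem gs_imp_disjoint (hgs : IsGSBasis lt S) :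
    OpIdeal S ⊓ spanSet k (IrrSet lt S) = ⊥ := by
  obtain ⟨hgs1, hgs2⟩ := hgs
  rw [monicVersion_eq hlt hm] at hgs1 hgs2
  rw [eq_bot_iff]
  rintro f ⟨hfI, hfIrr⟩
  rw [Submodule.mem_bot]
  by_contra hf0
  obtain ⟨t, hlmf⟩ := lm_exists hlt hf0
  -- represent f
  obtain ⟨n, c, g, hsum⟩ := Submodule.mem_span_set'.1 hfI
  have hg : ∀ i : Fin n, ∃ s ∈ S, ∃ q : StarWord Z, (g i : kM k Z) = q.substF s :=
    fun i => (g i).2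
  choose sL hsLS qL hxL using hg
  set L : List (k × StarWord Z × kM k Z) :=
    (List.ofFn (fun i => (c i, qL i, sL i))).filter (fun e => e.1 ≠ 0) with hLdef
  have hvalL : lval L = f := by
    rw [hLdef, lval_filter_nz, lval, List.map_ofFn, List.sum_ofFn, ← hsum]
    refine Finset.sum_congr rfl fun i _ => ?_
    show c i • (qL i).substF (sL i) = c i • (g i : kM k Z)
    rw [hxL i]
  have hgood : ∀ e ∈ L, e.2.2 ∈ S ∧ e.1 ≠ 0 := by
    intro e he
    rw [hLdef] at he
    have he' := List.mem_of_mem_filter he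
    have hne : e.1 ≠ 0 := by simpa using List.of_mem_filter he
    obtain ⟨i, rfl⟩ := List.mem_ofFn.1 he'
    exact ⟨hsLS i, hne⟩
  have hred : Red lt S t := by
    rcases hL0 : L with _ | ⟨e0, L0⟩
    · exfalso
      apply hf0
      rw [← hvalL, hL0, lval_nil]
    · set A := ((e0 :: L0).map (tope lt)).toFinset with hA
      have hAne : A.Nonempty := by simp [hA]
      obtain ⟨w0, hw0A, hmax⟩ := exists_max_finset hlt A hAne
      refine main_cd hlt hm hgs1 hgs2 w0
        (((e0 :: L0).filter (fun e => decide (tope lt e = w0))).length) (e0 :: L0)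
        (hL0 ▸ hgood) ?_ le_rfl t (by rw [← hL0, hvalL]; exact hlmf)
      intro e he
      have : tope lt e ∈ A := by
        rw [hA]
        exact List.mem_toFinset.2 (List.mem_map.2 ⟨e, he, rfl⟩)
      rcases eq_or_ne (tope lt e) w0 with h' | h'
      · exact Or.inl h'
      · exact Or.inr (hmax _ this h')
  have : t ∈ IrrSet lt S := mem_spanSet_iff.1 hfIrr t hlmf.1
  exact this hred

end Aux13
/-- Let `Z` be a set, `≤` a monomial order on `M(Z)`,
`S ⊆ kM(Z)` monicized with respect to `≤`, and `Π_S` the term-rewriting system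
from `≤`. Then the following are equivalent: (1) `Π_S` is convergent;
(2) `Π_S` is confluent; (3) `Id(S) ∩ k·Irr(S) = 0`; (4) `kM(Z) = Id(S) ⊕ k·Irr(S)`;
(5) `S` is a Gröbner–Shirshov basis in `kM(Z)` with respect to `≤`. -/
theorem convergent_tfae {k Z : Type} [Field k]
    (lt : OpWord Z → OpWord Z → Prop) (h : IsMonomialOrder lt)
    (S : Set (kM k Z)) (hm : Monicized lt S) :
    (ConvergentTRS (PiS lt S) ↔ Confluent (PiS lt S)) ∧
    (Confluent (PiS lt S) ↔ OpIdeal S ⊓ spanSet k (IrrSet lt S) = ⊥) ∧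
    (OpIdeal S ⊓ spanSet k (IrrSet lt S) = ⊥ ↔
      IsCompl (OpIdeal S) (spanSet k (IrrSet lt S))) ∧
    (IsCompl (OpIdeal S) (spanSet k (IrrSet lt S)) ↔ IsGSBasis lt S) := by
  have hcod : Codisjoint (OpIdeal S) (spanSet k (IrrSet lt S)) :=
    codisjoint_iff.mpr (Submodule.eq_top_iff'.mpr (codisjoint_id_irr h hm))
  refine ⟨⟨fun hc => hc.2, fun hc => ⟨terminating_PiS h hm, hc⟩⟩,
    ⟨confluent_imp_disjoint h hm, disjoint_imp_confluent h hm⟩,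
    ⟨fun h3 => ⟨disjoint_iff.mpr h3, hcod⟩, fun h4 => disjoint_iff.mp h4.disjoint⟩,
    ⟨fun h4 => disjoint_imp_gs h hm (disjoint_iff.mp h4.disjoint),
     fun h5 => ⟨disjoint_iff.mpr (gs_imp_disjoint h hm h5), hcod⟩⟩⟩

end RotaGS
end
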